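/- arXiv:1403.5232 — 6 statements merged into one kernel-verified Lean document; each statement's English description precedes it below -/
import Mathlib

section
/- (Chu–Vandermonde, Pochhammer form) For any natural number n and elements a, c of a commutative ℚ-algebra such that (c)_n is invertible, Σ_{k=0}^{n} (−n)_k (a)_k / ((c)_k k!) = (c−a)_n / (c)_n. -/
open Finset Polynomial

/-- Key combinatorial identity, valid in any commutative ring:
`∑_{k=0}^n (-1)^k C(n,k) (a)_k (c+k)_{n-k} = (c-a)_n`. -/
private theorem key_identity {R : Type*} [CommRing R] :
    ∀ (n : ℕ) (a c : R),
      (∑ k ∈ Finset.range (n + 1),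
          (-1 : R) ^ k * (n.choose k : R) * (ascPochhammer R k).eval a *
            (ascPochhammer R (n - k)).eval (c + k)) =
        (ascPochhammer R n).eval (c - a) := by
  intro n
  induction n with
  | zero => intro a c; simp
  | succ n ih =>
    intro a c
    rw [Finset.sum_range_succ']
    have hW : (∑ k ∈ Finset.range (n + 2),
        (-1 : R) ^ k * (n.choose k : R) * (ascPochhammer R k).eval a *
          (ascPochhammer R (n + 1 - k)).eval (c + k)) =
        (∑ k ∈ Finset.range (n + 1),
          (-1 : R) ^ (k + 1) * (n.choose (k + 1) : R) * (ascPochhammer R (k + 1)).eval a *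
            (ascPochhammer R (n - k)).eval (c + (k + 1))) +
          (-1 : R) ^ 0 * ((n + 1).choose 0 : R) * (ascPochhammer R 0).eval a *
            (ascPochhammer R (n + 1 - 0)).eval (c + ((0 : ℕ) : R)) := by
      rw [Finset.sum_range_succ']
      congr 1
      · apply Finset.sum_congr rfl
        intro k _
        have : n + 1 - (k + 1) = n - k := by omega
        rw [this]
        push_cast
        ring_nf
      · simp
    -- split choose (n+1) (k+1) = choose n k + choose n (k+1)
    have hsplit : (∑ k ∈ Finset.range (n + 1),
        (-1 : R) ^ (k + 1) * ((n + 1).choose (k + 1) : R) * (ascPochhammer R (k + 1)).eval a *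
          (ascPochhammer R (n + 1 - (k + 1))).eval (c + ↑(k + 1))) =
        (∑ k ∈ Finset.range (n + 1),
          (-1 : R) ^ (k + 1) * (n.choose k : R) * (ascPochhammer R (k + 1)).eval a *
            (ascPochhammer R (n - k)).eval (c + (k + 1))) +
        (∑ k ∈ Finset.range (n + 1),
          (-1 : R) ^ (k + 1) * (n.choose (k + 1) : R) * (ascPochhammer R (k + 1)).eval a *
            (ascPochhammer R (n - k)).eval (c + (k + 1))) := by
      rw [← Finset.sum_add_distrib]
      apply Finset.sum_congr rfl
      intro k _
      have h1 : n + 1 - (k + 1) = n - k := by omega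
      rw [h1, Nat.choose_succ_succ]
      push_cast
      ring
    rw [hsplit]
    -- the second sum plus the k=0 term equals the full W-sum minus its top (zero) term
    have hWtop : (∑ k ∈ Finset.range (n + 2),
        (-1 : R) ^ k * (n.choose k : R) * (ascPochhammer R k).eval a *
          (ascPochhammer R (n + 1 - k)).eval (c + k)) =
        (∑ k ∈ Finset.range (n + 1),
          (-1 : R) ^ k * (n.choose k : R) * (ascPochhammer R k).eval a *
            (ascPochhammer R (n + 1 - k)).eval (c + k)) := by
      rw [Finset.sum_range_succ, Nat.choose_succ_self]
      simp
    rw [add_assoc, ← hW, hWtop, ← Finset.sum_add_distrib]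
    have hterm : ∀ k ∈ Finset.range (n + 1),
        (-1 : R) ^ (k + 1) * (n.choose k : R) * (ascPochhammer R (k + 1)).eval a *
            (ascPochhammer R (n - k)).eval (c + (k + 1)) +
          (-1 : R) ^ k * (n.choose k : R) * (ascPochhammer R k).eval a *
            (ascPochhammer R (n + 1 - k)).eval (c + k) =
        (c - a) * ((-1 : R) ^ k * (n.choose k : R) * (ascPochhammer R k).eval a *
            (ascPochhammer R (n - k)).eval ((c + 1) + k)) := by
      intro k hk
      have hkn : k ≤ n := Nat.lt_succ_iff.mp (Finset.mem_range.mp hk)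
      have h1 : n + 1 - k = (n - k) + 1 := by omega
      rw [h1]
      -- (a)_{k+1} = (a)_k * (a + k)
      rw [ascPochhammer_succ_eval]
      -- (c+k)_{(n-k)+1} = (c+k) * ((c+k)+1)_{n-k}
      have h2 : (ascPochhammer R (n - k + 1)).eval (c + k) =
          (c + k) * (ascPochhammer R (n - k)).eval (c + k + 1) := by
        rw [ascPochhammer_succ_left, X_mul, eval_mul_X, eval_comp]
        simp [mul_comm]
      rw [h2]
      have h3 : (c + (k + 1) : R) = c + k + 1 := by push_cast; ring
      have h4 : ((c + 1) + k : R) = c + k + 1 := by ring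
      rw [h3, h4]
      push_cast
      ring
    rw [Finset.sum_congr rfl hterm, ← Finset.mul_sum, ih a (c + 1)]
    rw [ascPochhammer_succ_left, X_mul, eval_mul_X, eval_comp]
    simp only [eval_add, eval_X, eval_one]
    rw [mul_comm]
    congr 1
    ring

/-- Chu–Vandermonde in Pochhammer form: in a commutative `ℚ`-algebra with all
`(c)_k`, `k ≤ n`, invertible, `∑_{k=0}^n (-n)_k (a)_k / ((c)_k k!) = (c-a)_n / (c)_n`. -/
theorem chu_vandermonde_pochhammer (A : Type*) [CommRing A] [Algebra ℚ A]
    (a c : A) (n : ℕ) (hc : ∀ k ≤ n, IsUnit ((ascPochhammer A k).eval c)) :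
    (∑ k ∈ Finset.range (n + 1),
        (ascPochhammer A k).eval (-(n : A)) * (ascPochhammer A k).eval a *
          Ring.inverse ((ascPochhammer A k).eval c * (k.factorial : A))) =
      (ascPochhammer A n).eval (c - a) * Ring.inverse ((ascPochhammer A n).eval c) := by
  have hfac : ∀ k : ℕ, IsUnit ((k.factorial : A)) := by
    intro k
    have h1 : (k.factorial : A) = algebraMap ℚ A (k.factorial : ℚ) := by
      rw [map_natCast]
    rw [h1]
    exact (isUnit_iff_ne_zero.mpr (by exact_mod_cast k.factorial_ne_zero)).map (algebraMap ℚ A)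
  have hu := hc n le_rfl
  apply hu.mul_right_cancel
  rw [Finset.sum_mul, mul_assoc, Ring.inverse_mul_cancel _ hu, mul_one]
  have hterm : ∀ k ∈ Finset.range (n + 1),
      (ascPochhammer A k).eval (-(n : A)) * (ascPochhammer A k).eval a *
          Ring.inverse ((ascPochhammer A k).eval c * (k.factorial : A)) *
        (ascPochhammer A n).eval c =
      (-1 : A) ^ k * (n.choose k : A) * (ascPochhammer A k).eval a *
        (ascPochhammer A (n - k)).eval (c + k) := by
    intro k hk
    have hkn : k ≤ n := Nat.lt_succ_iff.mp (Finset.mem_range.mp hk)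
    have hunit : IsUnit ((ascPochhammer A k).eval c * (k.factorial : A)) :=
      (hc k hkn).mul (hfac k)
    have hmul : (ascPochhammer A k).eval c * (ascPochhammer A (n - k)).eval (c + k) =
        (ascPochhammer A n).eval c := by
      have := ascPochhammer_mul A k (n - k)
      rw [Nat.add_sub_cancel' hkn] at this
      calc (ascPochhammer A k).eval c * (ascPochhammer A (n - k)).eval (c + k)
          = (ascPochhammer A k * (ascPochhammer A (n - k)).comp (X + (k : A[X]))).eval c := by
            rw [eval_mul, eval_comp]; simp
        _ = (ascPochhammer A n).eval c := by rw [this]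
    have hneg : (ascPochhammer A k).eval (-(n : A)) =
        (-1 : A) ^ k * ((k.factorial * n.choose k : ℕ) : A) := by
      rw [ascPochhammer_eval_neg_eq_descPochhammer, descPochhammer_eval_eq_descFactorial,
        ← Nat.descFactorial_eq_factorial_mul_choose]
    calc (ascPochhammer A k).eval (-(n : A)) * (ascPochhammer A k).eval a *
          Ring.inverse ((ascPochhammer A k).eval c * (k.factorial : A)) *
        (ascPochhammer A n).eval c
        = ((-1 : A) ^ k * (n.choose k : A) * (ascPochhammer A k).eval a *
            (ascPochhammer A (n - k)).eval (c + k)) *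
          (Ring.inverse ((ascPochhammer A k).eval c * (k.factorial : A)) *
            ((ascPochhammer A k).eval c * (k.factorial : A))) := by
          rw [hneg, ← hmul]; push_cast; ring
      _ = (-1 : A) ^ k * (n.choose k : A) * (ascPochhammer A k).eval a *
            (ascPochhammer A (n - k)).eval (c + k) := by
          rw [Ring.inverse_mul_cancel _ hunit, mul_one]
  rw [Finset.sum_congr rfl hterm, key_identity]
end

section
/- For a prime p ≥ 5 and integers k with 1 ≤ k ≤ (p−1)/2 and any integer M, the congruence ((1−Mp)/2)_k ≡ (1/2)_k · (1 − Mp·A_k + M²p²·B_k) (mod p³) holds in Z_p, where A_k = Σ_{j=0}^{k−1} 1/(2j+1) and B_k = Σ_{0≤i<j≤k−1} 1/((2i+1)(2j+1)). -/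
private lemma asc_eval_prod {S : Type*} [CommSemiring S] (k : ℕ) (x : S) :
    (ascPochhammer S k).eval x = ∏ j ∈ Finset.range k, (x + j) := by
  induction k with
  | zero => simp
  | succ n ih => rw [ascPochhammer_succ_eval, ih, Finset.prod_range_succ]

private lemma key_bound {p : ℕ} [Fact p.Prime] (ε : ℝ) (hε0 : 0 ≤ ε) (hε1 : ε ≤ 1)
    (x : ℕ → ℚ_[p]) (k : ℕ) :
    (∀ j < k, ‖x j‖ ≤ ε) →
    ‖∏ j ∈ Finset.range k, (1 + x j) -
      (1 + ∑ j ∈ Finset.range k, x j +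
        ∑ j ∈ Finset.range k, ∑ i ∈ Finset.range j, x i * x j)‖ ≤ ε ^ 3 := by
  induction k with
  | zero => intro _; simpa using pow_nonneg hε0 3
  | succ n ih =>
    intro hx
    have ih' := ih (fun j hj => hx j (by omega))
    have hxn : ‖x n‖ ≤ ε := hx n (by omega)
    have hQ : ‖∑ j ∈ Finset.range n, ∑ i ∈ Finset.range j, x i * x j‖ ≤ ε ^ 2 := by
      apply IsUltrametricDist.norm_sum_le_of_forall_le_of_nonneg (by positivity)
      intro j hj
      apply IsUltrametricDist.norm_sum_le_of_forall_le_of_nonneg (by positivity)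
      intro i hi
      calc ‖x i * x j‖ ≤ ‖x i‖ * ‖x j‖ := norm_mul_le _ _
        _ ≤ ε * ε := by
            simp only [Finset.mem_range] at hi hj
            exact mul_le_mul (hx i (by omega)) (hx j (by omega)) (norm_nonneg _) hε0
        _ = ε ^ 2 := (sq ε).symm
    set P := ∏ j ∈ Finset.range n, (1 + x j) with hP
    set S := ∑ j ∈ Finset.range n, x j with hS
    set Q := ∑ j ∈ Finset.range n, ∑ i ∈ Finset.range j, x i * x j with hQdef
    have e1 : ∏ j ∈ Finset.range (n + 1), (1 + x j) = P * (1 + x n) :=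
      Finset.prod_range_succ _ _
    have e2 : ∑ j ∈ Finset.range (n + 1), x j = S + x n := Finset.sum_range_succ _ _
    have e3 : ∑ j ∈ Finset.range (n + 1), ∑ i ∈ Finset.range j, x i * x j
        = Q + S * x n := by
      rw [Finset.sum_range_succ, ← Finset.sum_mul]
    rw [e1, e2, e3]
    have key : P * (1 + x n) - (1 + (S + x n) + (Q + S * x n))
        = (P - (1 + S + Q)) * (1 + x n) + Q * x n := by ring
    rw [key]
    refine le_trans (IsUltrametricDist.norm_add_le_max _ _) (max_le ?_ ?_)
    · calc ‖(P - (1 + S + Q)) * (1 + x n)‖ ≤ ‖P - (1 + S + Q)‖ * ‖1 + x n‖ := norm_mul_le _ _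
        _ ≤ ε ^ 3 * 1 := by
            apply mul_le_mul ih' ?_ (norm_nonneg _) (by positivity)
            refine le_trans (IsUltrametricDist.norm_add_le_max _ _) (max_le ?_ (hxn.trans hε1))
            simp
        _ = ε ^ 3 := mul_one _
    · calc ‖Q * x n‖ ≤ ‖Q‖ * ‖x n‖ := norm_mul_le _ _
        _ ≤ ε ^ 2 * ε := mul_le_mul hQ hxn (norm_nonneg _) (by positivity)
        _ = ε ^ 3 := by ring

/-- For `p ≥ 5` prime, `1 ≤ k ≤ (p-1)/2` and `M ∈ ℤ`,
`((1-Mp)/2)_k ≡ (1/2)_k (1 - Mp A_k + M²p² B_k) (mod p³)` where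
`A_k = ∑_{j<k} 1/(2j+1)` and `B_k = ∑_{i<j<k} 1/((2i+1)(2j+1))`. -/
theorem pochhammer_half_perturbation (p : ℕ) [Fact p.Prime] (hp : 5 ≤ p)
    (M : ℤ) (k : ℕ) (hk1 : 1 ≤ k) (hk2 : k ≤ (p - 1) / 2) :
    ‖(ascPochhammer ℚ_[p] k).eval ((1 - (M : ℚ_[p]) * p) / 2) -
        (ascPochhammer ℚ_[p] k).eval (1 / 2) *
          (1 - (M : ℚ_[p]) * p * (∑ j ∈ Finset.range k, (2 * (j : ℚ_[p]) + 1)⁻¹) +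
            (M : ℚ_[p]) ^ 2 * (p : ℚ_[p]) ^ 2 *
              (∑ j ∈ Finset.range k, ∑ i ∈ Finset.range j,
                ((2 * (i : ℚ_[p]) + 1) * (2 * (j : ℚ_[p]) + 1))⁻¹))‖
      ≤ (p : ℝ) ^ (-3 : ℤ) := by
  have hprime : p.Prime := Fact.out
  have hodd : p % 2 = 1 := by
    rcases hprime.eq_two_or_odd with h | h
    · omega
    · exact h
  -- each 2j+1 for j < k is a p-adic unit
  have hnorm_nat : ∀ n : ℕ, 0 < n → n < p → ‖(n : ℚ_[p])‖ = 1 := by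
    intro n hn0 hnp
    have hle : ‖((n : ℤ) : ℚ_[p])‖ ≤ 1 := Padic.norm_int_le_one n
    have hnlt : ¬ ‖((n : ℤ) : ℚ_[p])‖ < 1 := by
      rw [Padic.norm_intCast_lt_one_iff]
      intro hdvd
      have := Int.le_of_dvd (by exact_mod_cast hn0) hdvd
      omega
    push_cast at hle hnlt ⊢
    linarith [lt_or_eq_of_le hle |>.resolve_left hnlt]
  have hck : ∀ j < k, ‖(2 * (j : ℚ_[p]) + 1)‖ = 1 := by
    intro j hj
    have hlt : 2 * j + 1 < p := by omega
    have : (2 * (j : ℚ_[p]) + 1) = ((2 * j + 1 : ℕ) : ℚ_[p]) := by push_cast; ring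
    rw [this]
    exact hnorm_nat _ (by omega) hlt
  have hcne : ∀ j < k, (2 * (j : ℚ_[p]) + 1) ≠ 0 := by
    intro j hj h
    have := hck j hj
    rw [h, norm_zero] at this
    norm_num at this
  -- the perturbations
  set x : ℕ → ℚ_[p] := fun j => -((M : ℚ_[p]) * p) * (2 * (j : ℚ_[p]) + 1)⁻¹ with hxdef
  have hε0 : (0 : ℝ) ≤ (p : ℝ)⁻¹ := by positivity
  have hε1 : (p : ℝ)⁻¹ ≤ 1 := by
    rw [inv_le_one_iff₀]; right; exact_mod_cast hprime.one_lt.le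
  have hx : ∀ j < k, ‖x j‖ ≤ (p : ℝ)⁻¹ := by
    intro j hj
    have : ‖x j‖ = ‖(M : ℚ_[p])‖ * ‖(p : ℚ_[p])‖ * ‖(2 * (j : ℚ_[p]) + 1)‖⁻¹ := by
      simp [hxdef, norm_mul, norm_inv]
    rw [this, hck j hj, inv_one, mul_one, Padic.norm_p]
    calc ‖(M : ℚ_[p])‖ * (p : ℝ)⁻¹ ≤ 1 * (p : ℝ)⁻¹ :=
          mul_le_mul_of_nonneg_right (Padic.norm_int_le_one M) hε0
      _ = (p : ℝ)⁻¹ := one_mul _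
  -- product factorization
  have hfac : (ascPochhammer ℚ_[p] k).eval ((1 - (M : ℚ_[p]) * p) / 2)
      = (ascPochhammer ℚ_[p] k).eval (1 / 2) * ∏ j ∈ Finset.range k, (1 + x j) := by
    rw [asc_eval_prod, asc_eval_prod, ← Finset.prod_mul_distrib]
    apply Finset.prod_congr rfl
    intro j hj
    have hne := hcne j (Finset.mem_range.mp hj)
    simp only [hxdef]
    field_simp
    ring
  -- target factorization
  have hT : (1 : ℚ_[p]) - (M : ℚ_[p]) * p * (∑ j ∈ Finset.range k, (2 * (j : ℚ_[p]) + 1)⁻¹) +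
        (M : ℚ_[p]) ^ 2 * (p : ℚ_[p]) ^ 2 *
          (∑ j ∈ Finset.range k, ∑ i ∈ Finset.range j,
            ((2 * (i : ℚ_[p]) + 1) * (2 * (j : ℚ_[p]) + 1))⁻¹)
      = 1 + ∑ j ∈ Finset.range k, x j
          + ∑ j ∈ Finset.range k, ∑ i ∈ Finset.range j, x i * x j := by
    have h1 : ∑ j ∈ Finset.range k, x j
        = -((M : ℚ_[p]) * p) * ∑ j ∈ Finset.range k, (2 * (j : ℚ_[p]) + 1)⁻¹ := by
      rw [Finset.mul_sum]
    have h2 : ∑ j ∈ Finset.range k, ∑ i ∈ Finset.range j, x i * x j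
        = (M : ℚ_[p]) ^ 2 * (p : ℚ_[p]) ^ 2 *
          ∑ j ∈ Finset.range k, ∑ i ∈ Finset.range j,
            ((2 * (i : ℚ_[p]) + 1) * (2 * (j : ℚ_[p]) + 1))⁻¹ := by
      rw [Finset.mul_sum]
      refine Finset.sum_congr rfl fun j _ => ?_
      rw [Finset.mul_sum]
      refine Finset.sum_congr rfl fun i _ => ?_
      rw [mul_inv]
      simp only [hxdef]
      ring
    rw [h1, h2]
    ring
  -- norm of (1/2)_k
  have h2norm : ‖(2 : ℚ_[p])‖ = 1 := by
    have := hnorm_nat 2 (by norm_num) (by omega)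
    simpa using this
  have heval_half : ‖(ascPochhammer ℚ_[p] k).eval (1 / 2 : ℚ_[p])‖ ≤ 1 := by
    rw [asc_eval_prod, norm_prod]
    apply Finset.prod_le_one (fun j _ => norm_nonneg _)
    intro j hj
    have h2ne : (2 : ℚ_[p]) ≠ 0 := by
      intro h; rw [h, norm_zero] at h2norm; norm_num at h2norm
    have : ((1 : ℚ_[p]) / 2 + j) = (2 * (j : ℚ_[p]) + 1) / 2 := by field_simp; ring
    rw [this, norm_div, hck j (Finset.mem_range.mp hj), h2norm]
    norm_num
  -- assemble
  have hkey := key_bound (p := p) ((p : ℝ)⁻¹) hε0 hε1 x k hx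
  rw [hfac, hT, ← mul_sub]
  calc ‖(ascPochhammer ℚ_[p] k).eval (1 / 2 : ℚ_[p]) *
        (∏ j ∈ Finset.range k, (1 + x j) -
          (1 + ∑ j ∈ Finset.range k, x j
            + ∑ j ∈ Finset.range k, ∑ i ∈ Finset.range j, x i * x j))‖
      ≤ ‖(ascPochhammer ℚ_[p] k).eval (1 / 2 : ℚ_[p])‖ * ‖_‖ := norm_mul_le _ _
    _ ≤ 1 * ((p : ℝ)⁻¹) ^ 3 := mul_le_mul heval_half hkey (norm_nonneg _) zero_le_one
    _ = (p : ℝ) ^ (-3 : ℤ) := by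
        rw [one_mul, inv_pow, ← zpow_natCast (p : ℝ) 3, ← zpow_neg]
        norm_num
end

section
/- (Kazandzidis-type consequence) For p ≥ 5 prime and r ≥ 1, binomial(2p^r, p^r) ≡ binomial(2p^{r−1}, p^{r−1}) (mod p^{3r}). -/
open Finset

namespace Kaz

def S (p n : ℕ) : Finset ℕ := (Finset.Ioc 0 n).filter (fun k => ¬ p ∣ k)

lemma prod_Ioc_zero_eq_factorial (n : ℕ) : (∏ x ∈ Finset.Ioc 0 n, x) = n.factorial := by
  rw [show Finset.Ioc 0 n = Finset.Ico 1 (n+1) by ext x; simp [Finset.mem_Ioc, Finset.mem_Ico]; omega]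
  exact Finset.prod_Ico_id_eq_factorial n

lemma factorial_split {p : ℕ} (hp : 0 < p) (m : ℕ) :
    (p * m).factorial = (∏ k ∈ S p (p*m), k) * p ^ m * m.factorial := by
  induction m with
  | zero => simp [S]
  | succ m ih =>
    have hle : p * m ≤ p * (m+1) := Nat.mul_le_mul_left p (by omega)
    have h1 : (p * (m+1)).factorial
        = (p*m).factorial * ∏ k ∈ Finset.Ioc (p*m) (p*(m+1)), k := by
      rw [← prod_Ioc_zero_eq_factorial, ← prod_Ioc_zero_eq_factorial,
        Finset.prod_Ioc_consecutive _ (Nat.zero_le _) hle]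
    have hfil : (Finset.Ioc (p*m) (p*(m+1))).filter (fun k => p ∣ k) = {p*(m+1)} := by
      ext k
      simp only [Finset.mem_filter, Finset.mem_Ioc, Finset.mem_singleton]
      constructor
      · rintro ⟨⟨h2, h3⟩, c, rfl⟩
        have hc1 : m < c := Nat.lt_of_mul_lt_mul_left h2
        have hc2 : c ≤ m + 1 := Nat.le_of_mul_le_mul_left h3 hp
        have : c = m + 1 := by omega
        subst this; rfl
      · rintro rfl
        exact ⟨⟨by nlinarith, le_refl _⟩, ⟨m+1, rfl⟩⟩
    have h2 : ∏ k ∈ Finset.Ioc (p*m) (p*(m+1)), k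
        = (p * (m+1)) * ∏ k ∈ (Finset.Ioc (p*m) (p*(m+1))).filter (fun k => ¬ p ∣ k), k := by
      rw [← Finset.prod_filter_mul_prod_filter_not (Finset.Ioc (p*m) (p*(m+1))) (fun k => p ∣ k), hfil,
        Finset.prod_singleton]
    have h3 : (∏ k ∈ S p (p*(m+1)), k)
        = (∏ k ∈ S p (p*m), k) * ∏ k ∈ (Finset.Ioc (p*m) (p*(m+1))).filter (fun k => ¬ p ∣ k), k := by
      rw [S, S, show Finset.Ioc 0 (p*(m+1)) = Finset.Ioc 0 (p*m) ∪ Finset.Ioc (p*m) (p*(m+1)) from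
          (Finset.Ioc_union_Ioc_eq_Ioc (Nat.zero_le _) hle).symm,
        Finset.filter_union]
      refine Finset.prod_union (Finset.disjoint_filter_filter ?_)
      rw [Finset.disjoint_left]
      intro a ha ha'
      simp only [Finset.mem_Ioc] at ha ha'
      omega
    rw [h1, ih, h2, h3, Nat.factorial_succ, pow_succ]
    ring


lemma prod_shift {p : ℕ} (hp : 0 < p) {N : ℕ} (hN : p ∣ N) :
    (∏ k ∈ S p (2*N), k) = (∏ k ∈ S p N, k) * ∏ k ∈ S p N, (N + k) := by
  have hle : N ≤ 2*N := by omega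
  have h3 : (∏ k ∈ S p (2*N), k)
      = (∏ k ∈ S p N, k) * ∏ k ∈ (Finset.Ioc N (2*N)).filter (fun k => ¬ p ∣ k), k := by
    rw [S, S, show Finset.Ioc 0 (2*N) = Finset.Ioc 0 N ∪ Finset.Ioc N (2*N) from
        (Finset.Ioc_union_Ioc_eq_Ioc (Nat.zero_le _) hle).symm,
      Finset.filter_union]
    refine Finset.prod_union (Finset.disjoint_filter_filter ?_)
    rw [Finset.disjoint_left]
    intro a ha ha'
    simp only [Finset.mem_Ioc] at ha ha'
    omega
  rw [h3]
  congr 1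
  refine (Finset.prod_bij' (fun k _ => N + k) (fun k _ => k - N) ?_ ?_ ?_ ?_ ?_).symm
  · intro a ha
    simp only [S, Finset.mem_filter, Finset.mem_Ioc] at ha ⊢
    exact ⟨⟨by omega, by omega⟩, fun h => ha.2 ((Nat.dvd_add_right hN).mp h)⟩
  · intro a ha
    simp only [S, Finset.mem_filter, Finset.mem_Ioc] at ha ⊢
    refine ⟨⟨by omega, by omega⟩, fun h => ha.2 ?_⟩
    have : a = N + (a - N) := by omega
    rw [this]
    exact (Nat.dvd_add_right hN).mpr h
  · intro a ha
    simp only [S, Finset.mem_filter, Finset.mem_Ioc] at ha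
    omega
  · intro a ha
    simp only [Finset.mem_filter, Finset.mem_Ioc] at ha
    omega
  · intro a _
    dsimp only

lemma key_identity {p : ℕ} (hp : 0 < p) (M : ℕ) :
    (2*(p*M)).choose (p*M) * (∏ k ∈ S p (p*M), k)
      = (2*M).choose M * ∏ k ∈ S p (p*M), (p*M + k) := by
  set N := p * M with hNdef
  have hN : N.factorial = (∏ k ∈ S p N, k) * p ^ M * M.factorial := factorial_split hp M
  have h2N : (2*N).factorial = (∏ k ∈ S p (2*N), k) * p ^ (2*M) * (2*M).factorial := by
    have h := factorial_split hp (2*M)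
    rw [show p*(2*M) = 2*N by ring] at h
    exact h
  have hshift := prod_shift hp (Dvd.intro M rfl : p ∣ N)
  have hc1 : (2*N).choose N * N.factorial * N.factorial = (2*N).factorial := by
    have := Nat.choose_mul_factorial_mul_factorial (show N ≤ 2*N by omega)
    rw [show 2*N - N = N by omega] at this
    linarith [this]
  have hc2 : (2*M).choose M * M.factorial * M.factorial = (2*M).factorial := by
    have := Nat.choose_mul_factorial_mul_factorial (show M ≤ 2*M by omega)
    rw [show 2*M - M = M by omega] at this
    linarith [this]
  have hP : 0 < ∏ k ∈ S p N, k := by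
    apply Finset.prod_pos
    intro i hi
    simp only [S, Finset.mem_filter, Finset.mem_Ioc] at hi
    omega
  have hX : 0 < (∏ k ∈ S p N, k) * p ^ (2*M) * (M.factorial * M.factorial) :=
    Nat.mul_pos (Nat.mul_pos hP (Nat.pow_pos hp)) (Nat.mul_pos M.factorial_pos M.factorial_pos)
  apply Nat.eq_of_mul_eq_mul_right hX
  calc (2*N).choose N * (∏ k ∈ S p N, k) * ((∏ k ∈ S p N, k) * p ^ (2*M) * (M.factorial * M.factorial))
      = (2*N).choose N * ((∏ k ∈ S p N, k) * p ^ M * M.factorial) * ((∏ k ∈ S p N, k) * p ^ M * M.factorial) := by ring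
    _ = (2*N).choose N * N.factorial * N.factorial := by rw [← hN]
    _ = (2*N).factorial := hc1
    _ = (∏ k ∈ S p (2*N), k) * p ^ (2*M) * (2*M).factorial := h2N
    _ = ((∏ k ∈ S p N, k) * ∏ k ∈ S p N, (N + k)) * p ^ (2*M) * ((2*M).choose M * M.factorial * M.factorial) := by rw [← hshift, hc2]
    _ = (2*M).choose M * (∏ k ∈ S p N, (N + k)) * ((∏ k ∈ S p N, k) * p ^ (2*M) * (M.factorial * M.factorial)) := by ring


lemma prod_one_add_expand {R : Type*} [CommRing R] (x : R) (hx : x^3 = 0)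
    (s : Finset ℕ) (a : ℕ → R) :
    2 * ∏ i ∈ s, (1 + x * a i)
      = 2 + 2 * x * (∑ i ∈ s, a i) + x^2 * ((∑ i ∈ s, a i)^2 - ∑ i ∈ s, (a i)^2) := by
  induction s using Finset.cons_induction with
  | empty => simp
  | cons b s hb ih =>
    rw [Finset.prod_cons, Finset.sum_cons, Finset.sum_cons]
    linear_combination (1 + x * a b) * ih
      + (a b * ((∑ i ∈ s, a i)^2 - ∑ i ∈ s, (a i)^2)) * hx

lemma mem_S {p n k : ℕ} : k ∈ S p n ↔ (0 < k ∧ k ≤ n) ∧ ¬ p ∣ k := by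
  simp [S, Finset.mem_filter, Finset.mem_Ioc]

lemma coprime_of_mem_S {p n k : ℕ} (hp : p.Prime) (hk : k ∈ S p n) (j : ℕ) :
    Nat.Coprime k (p ^ j) :=
  Nat.Coprime.pow_right j ((hp.coprime_iff_not_dvd.mpr (mem_S.mp hk).2).symm)

lemma sum_inv_sq {p : ℕ} (hp : p.Prime) (hp5 : 5 ≤ p) {t : ℕ} (ht : 1 ≤ t) :
    ∑ k ∈ S p (p^t), ((k : ZMod (p^t))⁻¹)^2 = 0 := by
  have hq1 : 1 < p ^ t := Nat.one_lt_pow (by omega) (by omega)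
  haveI : NeZero (p ^ t) := ⟨by omega⟩
  have hcast : ∑ k ∈ S p (p^t), ((k : ZMod (p^t))⁻¹)^2
      = ∑ x : (ZMod (p^t))ˣ, (((x : ZMod (p^t)))⁻¹)^2 := by
    apply Finset.sum_bij (fun k hk => ZMod.unitOfCoprime k (coprime_of_mem_S hp hk t))
    · intro a ha; exact Finset.mem_univ _
    · intro a ha b hb h
      have h' : ((a : ℕ) : ZMod (p^t)) = ((b : ℕ) : ZMod (p^t)) := by
        have := congrArg (fun u : (ZMod (p^t))ˣ => (u : ZMod (p^t))) h
        simpa [ZMod.coe_unitOfCoprime] using this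
      have ha' := mem_S.mp ha
      have hb' := mem_S.mp hb
      have hal : a < p ^ t := by
        rcases Nat.lt_or_ge a (p^t) with h | h
        · exact h
        · exfalso
          refine ha'.2 ?_
          have he : a = p ^ t := by omega
          rw [he]
          exact dvd_pow_self p (by omega)
      have hbl : b < p ^ t := by
        rcases Nat.lt_or_ge b (p^t) with h | h
        · exact h
        · exfalso
          refine hb'.2 ?_
          have he : b = p ^ t := by omega
          rw [he]
          exact dvd_pow_self p (by omega)
      calc a = ((a : ℕ) : ZMod (p^t)).val := (ZMod.val_cast_of_lt hal).symm
        _ = ((b : ℕ) : ZMod (p^t)).val := by rw [h']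
        _ = b := ZMod.val_cast_of_lt hbl
    · intro x _
      refine ⟨(x : ZMod (p^t)).val, ?_, ?_⟩
      · have hcop := ZMod.val_coe_unit_coprime x
        refine mem_S.mpr ⟨⟨?_, le_of_lt (ZMod.val_lt _)⟩, ?_⟩
        · rcases Nat.eq_zero_or_pos (x : ZMod (p^t)).val with h | h
          · exfalso; rw [h] at hcop
            simp [Nat.coprime_zero_left] at hcop; omega
          · exact h
        · intro hdvd
          have hg : p ∣ Nat.gcd ((x : ZMod (p^t)).val) (p^t) :=
            Nat.dvd_gcd hdvd (dvd_pow_self p (by omega))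
          rw [hcop] at hg
          have := Nat.le_of_dvd one_pos hg
          omega
      · apply Units.ext
        rw [ZMod.coe_unitOfCoprime]
        exact ZMod.natCast_rightInverse _
    · intro a ha
      simp [ZMod.coe_unitOfCoprime]
  rw [hcast]
  have hinv : ∑ x : (ZMod (p^t))ˣ, (((x : ZMod (p^t)))⁻¹)^2
      = ∑ x : (ZMod (p^t))ˣ, (((x : ZMod (p^t))))^2 := by
    rw [show (fun x : (ZMod (p^t))ˣ => (((x : ZMod (p^t)))⁻¹)^2)
        = (fun x : (ZMod (p^t))ˣ => (((x⁻¹ : (ZMod (p^t))ˣ) : ZMod (p^t)))^2) from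
      funext fun x => by rw [ZMod.inv_coe_unit]]
    exact Finset.sum_equiv (Equiv.inv _) (fun i => by simp) (fun i _ => by simp)
  rw [hinv]
  set T := ∑ x : (ZMod (p^t))ˣ, (((x : ZMod (p^t))))^2 with hT
  have hc2 : Nat.Coprime 2 (p^t) :=
    Nat.Coprime.pow_right t (by
      rw [Nat.coprime_primes Nat.prime_two hp]; omega)
  have hc3 : Nat.Coprime 3 (p^t) :=
    Nat.Coprime.pow_right t (by
      rw [Nat.coprime_primes Nat.prime_three hp]; omega)
  set c : (ZMod (p^t))ˣ := ZMod.unitOfCoprime 2 hc2 with hc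
  have h4 : T = 4 * T := by
    calc T = ∑ x : (ZMod (p^t))ˣ, (((c * x : (ZMod (p^t))ˣ) : ZMod (p^t)))^2 := by
          exact (Finset.sum_equiv (Equiv.mulLeft c) (fun i => by simp) (fun i _ => by simp)).symm
      _ = ∑ x : (ZMod (p^t))ˣ, (2 * (x : ZMod (p^t)))^2 := by
          apply Finset.sum_congr rfl
          intro x _
          have hc2v : ((c : ZMod (p^t))) = 2 := by
            rw [hc, ZMod.coe_unitOfCoprime]; norm_num
          rw [Units.val_mul, hc2v]
      _ = 4 * T := by
          rw [hT, Finset.mul_sum]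
          apply Finset.sum_congr rfl
          intro x _
          ring
  have h3T : (3 : ZMod (p^t)) * T = 0 := by linear_combination -h4
  have hu3 : IsUnit (3 : ZMod (p^t)) := by
    have := (ZMod.isUnit_iff_coprime 3 (p^t)).mpr hc3
    simpa using this
  calc T = 1 * T := (one_mul T).symm
    _ = ((3 : ZMod (p^t))⁻¹ * 3) * T := by rw [ZMod.inv_mul_of_unit _ hu3]
    _ = (3 : ZMod (p^t))⁻¹ * ((3 : ZMod (p^t)) * T) := by ring
    _ = 0 := by rw [h3T, mul_zero]


lemma isUnit_cast {p : ℕ} (hp : p.Prime) {n k : ℕ} (hk : k ∈ S p n) (j : ℕ) :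
    IsUnit (k : ZMod (p ^ j)) :=
  (ZMod.isUnit_iff_coprime _ _).mpr (coprime_of_mem_S hp hk j)

lemma factC {p : ℕ} (hp : p.Prime) (hp5 : 5 ≤ p) {t : ℕ} (ht : 1 ≤ t) :
    (p^t) ∣ ∑ k ∈ S p (p^t), (∏ j ∈ (S p (p^t)).erase k, j)^2 := by
  rw [← ZMod.natCast_eq_zero_iff]
  push_cast
  have hstep : ∀ k ∈ S p (p^t), (∏ j ∈ (S p (p^t)).erase k, (j : ZMod (p^t)))
      = ((k : ZMod (p^t))⁻¹) * ∏ j ∈ S p (p^t), (j : ZMod (p^t)) := by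
    intro k hk
    have hu : IsUnit (k : ZMod (p^t)) := isUnit_cast hp hk t
    have hm := Finset.mul_prod_erase (S p (p^t)) (fun j => (j : ZMod (p^t))) hk
    calc ∏ j ∈ (S p (p^t)).erase k, (j : ZMod (p^t))
        = ((k:ZMod (p^t))⁻¹ * (k:ZMod (p^t))) * ∏ j ∈ (S p (p^t)).erase k, (j : ZMod (p^t)) := by
          rw [ZMod.inv_mul_of_unit _ hu, one_mul]
      _ = (k : ZMod (p^t))⁻¹ * ∏ j ∈ S p (p^t), (j : ZMod (p^t)) := by rw [mul_assoc, hm]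
  calc ∑ k ∈ S p (p^t), (∏ j ∈ (S p (p^t)).erase k, (j:ZMod (p^t)))^2
      = ∑ k ∈ S p (p^t), ((∏ j ∈ S p (p^t), (j:ZMod (p^t)))^2 * ((k : ZMod (p^t))⁻¹)^2) := by
        refine Finset.sum_congr rfl (fun k hk => ?_)
        rw [hstep k hk]; ring
    _ = (∏ j ∈ S p (p^t), (j:ZMod (p^t)))^2 * ∑ k ∈ S p (p^t), ((k : ZMod (p^t))⁻¹)^2 := by
        rw [Finset.mul_sum]
    _ = 0 := by rw [sum_inv_sq hp hp5 ht, mul_zero]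

lemma factA {p : ℕ} (hp : p.Prime) (hp5 : 5 ≤ p) {t : ℕ} (ht : 1 ≤ t) :
    (p^(2*t)) ∣ ∑ k ∈ S p (p^t), ∏ j ∈ (S p (p^t)).erase k, j := by
  have hpN : p ∣ p ^ t := dvd_pow_self p (by omega)
  have hlt : ∀ k ∈ S p (p^t), k < p ^ t := by
    intro k hk
    obtain ⟨⟨h1, h2⟩, h3⟩ := mem_S.mp hk
    rcases lt_or_eq_of_le h2 with h | h
    · exact h
    · exact absurd (h ▸ hpN) h3
  have hσS : ∀ k ∈ S p (p^t), p^t - k ∈ S p (p^t) := by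
    intro k hk
    obtain ⟨⟨h1, h2⟩, h3⟩ := mem_S.mp hk
    have hklt := hlt k hk
    refine mem_S.mpr ⟨⟨by omega, by omega⟩, ?_⟩
    intro hd
    have h4 : p ∣ p^t - (p^t - k) := Nat.dvd_sub hpN hd
    rw [Nat.sub_sub_self h2] at h4
    exact h3 h4
  have hσne : ∀ k ∈ S p (p^t), p^t - k ≠ k := by
    intro k hk he
    obtain ⟨⟨h1, h2⟩, h3⟩ := mem_S.mp hk
    have h2k : 2 * k = p ^ t := by omega
    have : p ∣ 2 * k := h2k ▸ hpN
    rcases (Nat.Prime.dvd_mul hp).mp this with h | h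
    · have := Nat.le_of_dvd (by omega) h; omega
    · exact h3 h
  -- reindex
  have hre : (∑ k ∈ S p (p^t), ∏ j ∈ (S p (p^t)).erase k, j)
      = ∑ k ∈ S p (p^t), ∏ j ∈ (S p (p^t)).erase (p^t - k), j := by
    refine Finset.sum_bij' (fun k _ => p^t - k) (fun k _ => p^t - k) ?_ ?_ ?_ ?_ ?_
    · intro a ha; exact hσS a ha
    · intro a ha; exact hσS a ha
    · intro a ha
      have := hlt a ha; omega
    · intro a ha
      have := hlt a ha; omega
    · intro a ha
      congr 1
      have := hlt a ha
      have h : p ^ t - (p ^ t - a) = a := by omega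
      rw [h]
  have hsum : 2 * (∑ k ∈ S p (p^t), ∏ j ∈ (S p (p^t)).erase k, j)
      = p^t * ∑ k ∈ S p (p^t), ∏ j ∈ ((S p (p^t)).erase k).erase (p^t - k), j := by
    rw [two_mul]
    nth_rewrite 2 [hre]
    rw [← Finset.sum_add_distrib, Finset.mul_sum]
    refine Finset.sum_congr rfl (fun k hk => ?_)
    have hkS := mem_S.mp hk
    have hσk := hσS k hk
    have hne := hσne k hk
    have hmem1 : p^t - k ∈ (S p (p^t)).erase k := Finset.mem_erase.mpr ⟨hne, hσk⟩
    have hmem2 : k ∈ (S p (p^t)).erase (p^t - k) := Finset.mem_erase.mpr ⟨fun h => hne h.symm, hk⟩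
    have e1 : (∏ j ∈ (S p (p^t)).erase k, j)
        = (p^t - k) * ∏ j ∈ ((S p (p^t)).erase k).erase (p^t - k), j :=
      (Finset.mul_prod_erase _ _ hmem1).symm
    have e2 : (∏ j ∈ (S p (p^t)).erase (p^t - k), j)
        = k * ∏ j ∈ ((S p (p^t)).erase (p^t - k)).erase k, j :=
      (Finset.mul_prod_erase _ _ hmem2).symm
    rw [Finset.erase_right_comm] at e2
    rw [e1, e2]
    have hle : k ≤ p ^ t := hkS.1.2
    have : p ^ t - k + k = p ^ t := by omega
    calc (p^t - k) * ∏ j ∈ ((S p (p^t)).erase k).erase (p^t - k), j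
          + k * ∏ j ∈ ((S p (p^t)).erase k).erase (p^t - k), j
        = (p^t - k + k) * ∏ j ∈ ((S p (p^t)).erase k).erase (p^t - k), j := by ring
      _ = p^t * ∏ j ∈ ((S p (p^t)).erase k).erase (p^t - k), j := by rw [this]
  -- p^t divides the inner sum E
  have hE : (p^t) ∣ ∑ k ∈ S p (p^t), ∏ j ∈ ((S p (p^t)).erase k).erase (p^t - k), j := by
    rw [← ZMod.natCast_eq_zero_iff]
    push_cast
    have hstep : ∀ k ∈ S p (p^t), (∏ j ∈ ((S p (p^t)).erase k).erase (p^t - k), (j : ZMod (p^t)))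
        = -(((k : ZMod (p^t))⁻¹)^2 * ∏ j ∈ S p (p^t), (j : ZMod (p^t))) := by
      intro k hk
      have hu : IsUnit (k : ZMod (p^t)) := isUnit_cast hp hk t
      have h1 : (k : ZMod (p^t)) * (k : ZMod (p^t))⁻¹ = 1 := ZMod.mul_inv_of_unit _ hu
      have hσk := hσS k hk
      have hne := hσne k hk
      have hmem1 : p^t - k ∈ (S p (p^t)).erase k := Finset.mem_erase.mpr ⟨hne, hσk⟩
      have e1 := Finset.mul_prod_erase ((S p (p^t)).erase k) (fun j => (j : ZMod (p^t))) hmem1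
      have e2 := Finset.mul_prod_erase (S p (p^t)) (fun j => (j : ZMod (p^t))) hk
      have hle : k ≤ p ^ t := (mem_S.mp hk).1.2
      have hz : ((p^t : ℕ) : ZMod (p^t)) = 0 := ZMod.natCast_self _
      have hNk : (((p^t - k : ℕ)) : ZMod (p^t)) = -(k : ZMod (p^t)) := by
        rw [Nat.cast_sub hle, hz]
        ring
      have heq' : -((k : ZMod (p^t))^2) * (∏ j ∈ ((S p (p^t)).erase k).erase (p^t - k), (j : ZMod (p^t)))
          = ∏ j ∈ S p (p^t), (j : ZMod (p^t)) := by
        linear_combination e2 + (k : ZMod (p^t)) * e1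
          - (k : ZMod (p^t)) * (∏ j ∈ ((S p (p^t)).erase k).erase (p^t - k), (j : ZMod (p^t))) * hNk
      linear_combination (-((k : ZMod (p^t))⁻¹)^2) * heq'
        + (-((∏ j ∈ ((S p (p^t)).erase k).erase (p^t - k), (j : ZMod (p^t))) * ((k : ZMod (p^t)) * (k : ZMod (p^t))⁻¹ + 1))) * h1
    calc ∑ k ∈ S p (p^t), ∏ j ∈ ((S p (p^t)).erase k).erase (p^t - k), (j : ZMod (p^t))
        = ∑ k ∈ S p (p^t), -((∏ j ∈ S p (p^t), (j : ZMod (p^t))) * ((k : ZMod (p^t))⁻¹)^2) := by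
          refine Finset.sum_congr rfl (fun k hk => ?_)
          rw [hstep k hk]; ring
      _ = -((∏ j ∈ S p (p^t), (j : ZMod (p^t))) * ∑ k ∈ S p (p^t), ((k : ZMod (p^t))⁻¹)^2) := by
          rw [Finset.sum_neg_distrib, Finset.mul_sum]
      _ = 0 := by rw [sum_inv_sq hp hp5 ht]; ring
  obtain ⟨E', hE'⟩ := hE
  have h2A : 2 * (∑ k ∈ S p (p^t), ∏ j ∈ (S p (p^t)).erase k, j) = p^(2*t) * E' := by
    rw [hsum, hE', two_mul t, pow_add]
    ring
  have hcop : Nat.Coprime (p^(2*t)) 2 :=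
    Nat.Coprime.pow_left (2*t) ((Nat.coprime_primes hp Nat.prime_two).mpr (by omega))
  refine hcop.dvd_of_dvd_mul_left ?_
  exact ⟨E', h2A⟩


lemma main_cong {p : ℕ} (hp : p.Prime) (hp5 : 5 ≤ p) {t : ℕ} (ht : 1 ≤ t) :
    ((p^(3*t) : ℕ) : ℤ) ∣
      ((∏ k ∈ S p (p^t), (p^t + k) : ℕ) : ℤ) - ((∏ k ∈ S p (p^t), k : ℕ) : ℤ) := by
  set q := p ^ (3*t) with hq
  rw [← ZMod.intCast_zmod_eq_zero_iff_dvd]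
  push_cast
  rw [sub_eq_zero]
  set x : ZMod q := (p : ZMod q) ^ t with hx
  have hx3 : x ^ 3 = 0 := by
    rw [hx, ← pow_mul, show t * 3 = 3 * t from mul_comm t 3, ← Nat.cast_pow, ← hq,
      ZMod.natCast_self]
  have hunit : ∀ k ∈ S p (p^t), IsUnit (k : ZMod q) := fun k hk => isUnit_cast hp hk (3*t)
  have hfac : ∀ k ∈ S p (p^t), x + (k : ZMod q) = (k : ZMod q) * (1 + x * (k : ZMod q)⁻¹) := by
    intro k hk
    have h1 : (k : ZMod q) * (k : ZMod q)⁻¹ = 1 := ZMod.mul_inv_of_unit _ (hunit k hk)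
    linear_combination (-x) * h1
  have hQ : (∏ k ∈ S p (p^t), (x + (k : ZMod q)))
      = (∏ k ∈ S p (p^t), (k : ZMod q)) * ∏ k ∈ S p (p^t), (1 + x * (k : ZMod q)⁻¹) := by
    rw [← Finset.prod_mul_distrib]
    exact Finset.prod_congr rfl hfac
  have hPk : ∀ k ∈ S p (p^t),
      (∏ j ∈ S p (p^t), (j : ZMod q)) * (k : ZMod q)⁻¹ = ∏ j ∈ (S p (p^t)).erase k, (j : ZMod q) := by
    intro k hk
    have h1 : (k : ZMod q) * (k : ZMod q)⁻¹ = 1 := ZMod.mul_inv_of_unit _ (hunit k hk)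
    have hm := Finset.mul_prod_erase (S p (p^t)) (fun j => (j : ZMod q)) hk
    linear_combination (-((k : ZMod q)⁻¹)) * hm + (∏ j ∈ (S p (p^t)).erase k, (j : ZMod q)) * h1
  have hPunit : IsUnit (∏ j ∈ S p (p^t), (j : ZMod q)) := by
    rw [← Nat.cast_prod]
    refine (ZMod.isUnit_iff_coprime _ _).mpr ?_
    exact Nat.Coprime.prod_left (fun k hk => coprime_of_mem_S hp hk (3*t))
  -- first moment
  obtain ⟨A', hA'⟩ := factA hp hp5 ht
  have hPsum : (∏ j ∈ S p (p^t), (j : ZMod q)) * (∑ k ∈ S p (p^t), (k : ZMod q)⁻¹)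
      = ((∑ k ∈ S p (p^t), ∏ j ∈ (S p (p^t)).erase k, j : ℕ) : ZMod q) := by
    push_cast
    rw [Finset.mul_sum]
    exact Finset.sum_congr rfl hPk
  have hsum1 : x * ∑ k ∈ S p (p^t), (k : ZMod q)⁻¹ = 0 := by
    refine hPunit.mul_left_cancel ?_
    have hAc : ((∑ k ∈ S p (p^t), ∏ j ∈ (S p (p^t)).erase k, j : ℕ) : ZMod q)
        = (p : ZMod q)^(2*t) * (A' : ZMod q) := by
      rw [hA']; push_cast; ring
    calc (∏ j ∈ S p (p^t), (j : ZMod q)) * (x * ∑ k ∈ S p (p^t), (k : ZMod q)⁻¹)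
        = x * ((∏ j ∈ S p (p^t), (j : ZMod q)) * ∑ k ∈ S p (p^t), (k : ZMod q)⁻¹) := by ring
      _ = x * ((p : ZMod q)^(2*t) * (A' : ZMod q)) := by rw [hPsum, hAc]
      _ = ((q : ℕ) : ZMod q) * (A' : ZMod q) := by
          rw [hx, hq]; push_cast; ring
      _ = 0 := by rw [ZMod.natCast_self]; ring
      _ = (∏ j ∈ S p (p^t), (j : ZMod q)) * 0 := by ring
  -- second moment
  obtain ⟨C', hC'⟩ := factC hp hp5 ht
  have hPsum2 : (∏ j ∈ S p (p^t), (j : ZMod q))^2 * (∑ k ∈ S p (p^t), ((k : ZMod q)⁻¹)^2)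
      = ((∑ k ∈ S p (p^t), (∏ j ∈ (S p (p^t)).erase k, j)^2 : ℕ) : ZMod q) := by
    push_cast
    rw [Finset.mul_sum]
    refine Finset.sum_congr rfl (fun k hk => ?_)
    rw [← hPk k hk]; ring
  have hsum2 : x^2 * ∑ k ∈ S p (p^t), ((k : ZMod q)⁻¹)^2 = 0 := by
    refine (hPunit.pow 2).mul_left_cancel ?_
    have hCc : ((∑ k ∈ S p (p^t), (∏ j ∈ (S p (p^t)).erase k, j)^2 : ℕ) : ZMod q)
        = (p : ZMod q)^t * (C' : ZMod q) := by
      rw [hC']; push_cast; ring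
    calc (∏ j ∈ S p (p^t), (j : ZMod q))^2 * (x^2 * ∑ k ∈ S p (p^t), ((k : ZMod q)⁻¹)^2)
        = x^2 * ((∏ j ∈ S p (p^t), (j : ZMod q))^2 * ∑ k ∈ S p (p^t), ((k : ZMod q)⁻¹)^2) := by ring
      _ = x^2 * ((p : ZMod q)^t * (C' : ZMod q)) := by rw [hPsum2, hCc]
      _ = ((q : ℕ) : ZMod q) * (C' : ZMod q) := by
          rw [hx, hq]; push_cast; ring
      _ = 0 := by rw [ZMod.natCast_self]; ring
      _ = (∏ j ∈ S p (p^t), (j : ZMod q))^2 * 0 := by ring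
  -- conclude
  have hexp := prod_one_add_expand x hx3 (S p (p^t)) (fun k => (k : ZMod q)⁻¹)
  have h2 : (2 : ZMod q) * ∏ k ∈ S p (p^t), (1 + x * (k : ZMod q)⁻¹) = 2 * 1 := by
    rw [hexp]
    linear_combination (2 + x * (∑ k ∈ S p (p^t), (k : ZMod q)⁻¹)) * hsum1 - hsum2
  have hu2 : IsUnit (2 : ZMod q) := by
    have := (ZMod.isUnit_iff_coprime 2 q).mpr
      (Nat.Coprime.pow_right _ ((Nat.coprime_primes Nat.prime_two hp).mpr (by omega)))
    simpa using this
  have hone : ∏ k ∈ S p (p^t), (1 + x * (k : ZMod q)⁻¹) = 1 := hu2.mul_left_cancel h2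
  rw [hQ, hone, mul_one]


end Kaz

/-- Kazandzidis-type supercongruence: for `p ≥ 5` prime and `r ≥ 1`,
`C(2p^r, p^r) ≡ C(2p^{r-1}, p^{r-1}) (mod p^{3r})`. -/
theorem kazandzidis_central_binom (p : ℕ) (hp : p.Prime) (hp5 : 5 ≤ p)
    (r : ℕ) (hr : 1 ≤ r) :
    ((p : ℤ) ^ (3 * r)) ∣
      ((Nat.choose (2 * p ^ r) (p ^ r) : ℤ) -
        (Nat.choose (2 * p ^ (r - 1)) (p ^ (r - 1)) : ℤ)) := by
  obtain ⟨s, rfl⟩ : ∃ s, r = s + 1 := ⟨r - 1, by omega⟩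
  simp only [Nat.add_sub_cancel]
  have hkey := Kaz.key_identity hp.pos (p ^ s)
  rw [show p * p ^ s = p ^ (s+1) from (pow_succ' p s).symm] at hkey
  have hcong := Kaz.main_cong hp hp5 (t := s+1) (by omega)
  have hcop : IsCoprime ((p:ℤ)^(3*(s+1))) ((∏ k ∈ Kaz.S p (p^(s+1)), k : ℕ) : ℤ) := by
    rw [show ((p:ℤ)^(3*(s+1))) = ((p^(3*(s+1)) : ℕ) : ℤ) by push_cast; ring,
      Nat.isCoprime_iff_coprime]
    exact Nat.Coprime.prod_right
      (fun k hk => (Kaz.coprime_of_mem_S hp hk (3*(s+1))).symm)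
  have hZ : ((Nat.choose (2 * p^(s+1)) (p^(s+1)) : ℤ) - (Nat.choose (2*p^s) (p^s) : ℤ))
        * ((∏ k ∈ Kaz.S p (p^(s+1)), k : ℕ) : ℤ)
      = (Nat.choose (2*p^s) (p^s) : ℤ)
        * (((∏ k ∈ Kaz.S p (p^(s+1)), (p^(s+1)+k) : ℕ) : ℤ)
          - ((∏ k ∈ Kaz.S p (p^(s+1)), k : ℕ) : ℤ)) := by
    have hcast := congrArg (fun n : ℕ => (n : ℤ)) hkey
    push_cast at hcast ⊢
    linear_combination hcast
  refine hcop.dvd_of_dvd_mul_right ?_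
  rw [hZ]
  refine Dvd.dvd.mul_left ?_ _
  have : ((p^(3*(s+1)) : ℕ) : ℤ) = (p:ℤ)^(3*(s+1)) := by push_cast; ring
  rw [← this]
  exact hcong
end

section
/- For a prime p ≡ 3 (mod 4), the terminating hypergeometric sum Σ_{k=0}^{(p−1)/2} ((1−p)/2)_k ((1+p)/2)_k (1/2)_k / ((1)_k (1)_k k!) equals 0. -/
open Finset

lemma poch_one (k : ℕ) : (ascPochhammer ℚ k).eval (1:ℚ) = k.factorial := by
  induction k with
  | zero => simp
  | succ k ih =>
    rw [ascPochhammer_succ_right]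
    simp [ih, Nat.factorial_succ]
    ring

lemma poch_neg (n k : ℕ) :
    (ascPochhammer ℚ k).eval (-(n:ℚ)) = (-1)^k * k.factorial * n.choose k := by
  induction k with
  | zero => simp
  | succ k ih =>
    rw [ascPochhammer_succ_right]
    simp only [Polynomial.eval_mul, Polynomial.eval_add, Polynomial.eval_X,
      Polynomial.eval_natCast, ih]
    rcases le_or_gt (k+1) n with h | h
    · have h2 : (n.choose (k+1) * (k+1) : ℚ) = n.choose k * ((n:ℚ) - k) := by
        calc (n.choose (k+1) * (k+1) : ℚ) = ((n.choose (k+1) * (k+1) : ℕ) : ℚ) := by push_cast; ring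
          _ = ((n.choose k * (n - k) : ℕ) : ℚ) := by rw [Nat.choose_succ_right_eq]
          _ = n.choose k * ((n:ℚ) - k) := by
              push_cast [Nat.cast_sub (le_of_lt h)]; ring
      rw [Nat.factorial_succ]
      push_cast
      linear_combination ((-1:ℚ)^k * k.factorial) * h2
    · have h1 : n.choose (k+1) = 0 := Nat.choose_eq_zero_of_lt h
      rcases Nat.lt_succ_iff_lt_or_eq.mp h with h' | h'
      · have h0 : n.choose k = 0 := Nat.choose_eq_zero_of_lt h'
        simp [h0, h1]
      · subst h'
        simp [h1]

lemma poch_pos (n k : ℕ) :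
    (ascPochhammer ℚ k).eval ((n:ℚ)+1) = k.factorial * (n+k).choose k := by
  induction k with
  | zero => simp
  | succ k ih =>
    rw [ascPochhammer_succ_right]
    simp only [Polynomial.eval_mul, Polynomial.eval_add, Polynomial.eval_X,
      Polynomial.eval_natCast, ih, ← Nat.add_assoc]
    have h2 : ((n+k+1) * (n+k).choose k : ℚ) = (n+k+1).choose (k+1) * (k+1) := by
      exact_mod_cast congrArg (Nat.cast : ℕ → ℚ) (Nat.add_one_mul_choose_eq (n+k) k)
    rw [Nat.factorial_succ]
    push_cast
    linear_combination ((k.factorial : ℚ)) * h2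

lemma poch_half (k : ℕ) :
    (ascPochhammer ℚ k).eval (1/2 : ℚ) = (2*k).choose k * k.factorial / 4^k := by
  induction k with
  | zero => simp
  | succ k ih =>
    rw [ascPochhammer_succ_right]
    simp only [Polynomial.eval_mul, Polynomial.eval_add, Polynomial.eval_X,
      Polynomial.eval_natCast, ih]
    have h2 : ((k+1) * (2*(k+1)).choose (k+1) : ℚ) = 2 * (2*k+1) * (2*k).choose k := by
      exact_mod_cast congrArg (Nat.cast : ℕ → ℚ) (Nat.succ_mul_centralBinom_succ k)
    rw [Nat.factorial_succ]
    have h4 : (4:ℚ)^k ≠ 0 := by positivity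
    field_simp
    push_cast
    push_cast at h2
    linear_combination (-2 * (4:ℚ)^k * k.factorial) * h2

lemma h1n (n k : ℕ) : (n+1)*(n+2)*((n+2+k).choose k) = (n+k+1)*((n+k+2)*((n+k).choose k)) := by
  have a1 := Nat.choose_mul_succ_eq (n+k) k
  have a2 := Nat.choose_mul_succ_eq (n+k+1) k
  have e1 : n + k + 1 - k = n + 1 := by omega
  have e2 : n + k + 2 - k = n + 2 := by omega
  rw [e1] at a1
  rw [show n+k+1+1 = n+k+2 by omega, show n+k+1+1-k = n+2 by omega] at a2
  have : n+2+k = n+k+2 := by omega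
  rw [this]
  calc (n+1)*(n+2)*((n+k+2).choose k) = (n+1)*((n+k+2).choose k * (n+2)) := by ring
    _ = (n+1)*((n+k+1).choose k * (n+k+2)) := by rw [← a2]
    _ = (n+k+2)*((n+k+1).choose k * (n+1)) := by ring
    _ = (n+k+2)*((n+k).choose k * (n+k+1)) := by rw [← a1]
    _ = (n+k+1)*((n+k+2)*((n+k).choose k)) := by ring

lemma h2n (n k : ℕ) : (n+1)*(n+2)*(n.choose k) = (n+2-k)*((n+1-k)*((n+2).choose k)) := by
  have a1 := Nat.choose_mul_succ_eq n k
  have a2 := Nat.choose_mul_succ_eq (n+1) k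
  rw [show n+1+1 = n+2 by omega] at a2
  calc (n+1)*(n+2)*(n.choose k) = (n+2)*(n.choose k * (n+1)) := by ring
    _ = (n+2)*((n+1).choose k * (n+1-k)) := by rw [a1]
    _ = (n+1-k)*((n+1).choose k * (n+2)) := by ring
    _ = (n+1-k)*((n+2).choose k * (n+2-k)) := by rw [a2]
    _ = (n+2-k)*((n+1-k)*((n+2).choose k)) := by ring

lemma h3n (n k : ℕ) : (k+1)*((n+2).choose (k+1)) = (n+2-k)*((n+2).choose k) := by
  have := Nat.choose_succ_right_eq (n+2) k
  rw [mul_comm (k+1), this, mul_comm]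

lemma h4n (n k : ℕ) : (k+1)*((n+k+1).choose (k+1)) = (n+k+1)*((n+k).choose k) := by
  have := Nat.add_one_mul_choose_eq (n+k) k
  rw [mul_comm (k+1), ← this]

lemma h5n (k : ℕ) : (k+1)*((2*k+2).choose (k+1)) = 2*((2*k+1)*((2*k).choose k)) := by
  have := Nat.succ_mul_centralBinom_succ k
  unfold Nat.centralBinom at this
  rw [show 2*(k+1) = 2*k+2 by omega] at this
  rw [this]; ring

lemma starId (n k : ℕ) :
    4*((n:ℚ)+1)*((n:ℚ)+2)^3 * (((n+2).choose k : ℚ) * ((n+2+k).choose k : ℚ) * ((2*k).choose k : ℚ))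
  = 4*((n:ℚ)+1)^3*((n:ℚ)+2) * ((n.choose k : ℚ) * ((n+k).choose k : ℚ) * ((2*k).choose k : ℚ))
  + 2*(2*(n:ℚ)+3)*((k:ℚ)+1)^3 * (((n+2).choose (k+1) : ℚ) * ((n+k+1).choose (k+1) : ℚ) * ((2*k+2).choose (k+1) : ℚ))
  + 8*(2*(n:ℚ)+3)*(k:ℚ)^3 * (((n+2).choose k : ℚ) * ((n+k).choose k : ℚ) * ((2*k).choose k : ℚ)) := by
  have hn12 : ((n:ℚ)+1)*((n:ℚ)+2) ≠ 0 := by positivity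
  have hk1 : ((k:ℚ)+1) ≠ 0 := by positivity
  have e1 : ((n+2+k).choose k : ℚ) = ((n:ℚ)+k+1)*(((n:ℚ)+k+2)*((n+k).choose k : ℚ)) / (((n:ℚ)+1)*((n:ℚ)+2)) := by
    rw [eq_div_iff hn12]
    have := congrArg (Nat.cast : ℕ → ℚ) (h1n n k)
    push_cast at this
    linarith [this]
  have e4 : ((n+k+1).choose (k+1) : ℚ) = ((n:ℚ)+k+1)*((n+k).choose k : ℚ) / ((k:ℚ)+1) := by
    rw [eq_div_iff hk1]
    have := congrArg (Nat.cast : ℕ → ℚ) (h4n n k)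
    push_cast at this
    linarith [this]
  have e5 : ((2*k+2).choose (k+1) : ℚ) = 2*((2*(k:ℚ)+1)*((2*k).choose k : ℚ)) / ((k:ℚ)+1) := by
    rw [eq_div_iff hk1]
    have := congrArg (Nat.cast : ℕ → ℚ) (h5n k)
    push_cast at this
    linarith [this]
  rcases le_or_gt k (n+1) with hk | hk
  · have ha : ((n+2-k : ℕ) : ℚ) = (n:ℚ)+2-k := by
      rw [Nat.cast_sub (by omega)]; push_cast; ring
    have hb : ((n+1-k : ℕ) : ℚ) = (n:ℚ)+1-k := by
      rw [Nat.cast_sub (by omega)]; push_cast; ring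
    have e2 : ((n).choose k : ℚ) = ((n:ℚ)+2-k)*(((n:ℚ)+1-k)*((n+2).choose k : ℚ)) / (((n:ℚ)+1)*((n:ℚ)+2)) := by
      rw [eq_div_iff hn12]
      have := congrArg (Nat.cast : ℕ → ℚ) (h2n n k)
      push_cast [ha, hb] at this
      linarith [this]
    have e3 : ((n+2).choose (k+1) : ℚ) = ((n:ℚ)+2-k)*((n+2).choose k : ℚ) / ((k:ℚ)+1) := by
      rw [eq_div_iff hk1]
      have := congrArg (Nat.cast : ℕ → ℚ) (h3n n k)
      push_cast [ha] at this
      linarith [this]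
    rw [e1, e2, e3, e4, e5]
    field_simp
    ring
  · rcases Nat.lt_or_ge k (n+3) with hk2 | hk2
    · have hkeq : k = n+2 := by omega
      subst hkeq
      have z1 : (n).choose (n+2) = 0 := Nat.choose_eq_zero_of_lt (by omega)
      have z2 : (n+2).choose (n+2+1) = 0 := Nat.choose_eq_zero_of_lt (by omega)
      have c1 : (n+2).choose (n+2) = 1 := Nat.choose_self _
      -- key: (n+1)*C(2n+4,n+2) = 2*(2n+3)*C(2n+2,n+2)
      have k1 := h5n (n+1)
      rw [show n+1+1 = n+2 by omega, show 2*(n+1)+2 = 2*n+4 by omega,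
        show 2*(n+1) = 2*n+2 by omega] at k1
      have k2 := Nat.choose_succ_right_eq (2*n+2) (n+1)
      rw [show n+1+1 = n+2 by omega, show 2*n+2-(n+1) = n+1 by omega] at k2
      have hq1 := congrArg (Nat.cast : ℕ → ℚ) k1
      have hq2 := congrArg (Nat.cast : ℕ → ℚ) k2
      push_cast at hq1 hq2
      have key : ((n:ℚ)+1) * (((2*n+4).choose (n+2)) : ℚ)
          = 2*(2*(n:ℚ)+3) * (((2*n+2).choose (n+2)) : ℚ) := by
        have hn2 : ((n:ℚ)+2) ≠ 0 := by positivity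
        apply mul_left_cancel₀ hn2
        linear_combination ((n:ℚ)+1)*hq1 - 2*(2*(n:ℚ)+3)*hq2
      rw [z1, z2, c1, show n+2+(n+2) = 2*n+4 by omega, show n+(n+2) = 2*n+2 by omega,
        show 2*(n+2) = 2*n+4 by omega]
      push_cast
      linear_combination 4*((n:ℚ)+2)^3*(((2*n+4).choose (n+2) : ℕ) : ℚ)*key
    · have z1 : (n+2).choose k = 0 := Nat.choose_eq_zero_of_lt (by omega)
      have z2 : (n+2).choose (k+1) = 0 := Nat.choose_eq_zero_of_lt (by omega)
      have z3 : (n).choose k = 0 := Nat.choose_eq_zero_of_lt (by omega)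
      rw [z1, z2, z3]
      push_cast
      ring

noncomputable def tq (n k : ℕ) : ℚ :=
  (-1)^k * (n.choose k) * ((n+k).choose k) * ((2*k).choose k) / 4^k

noncomputable def Hq (n k : ℕ) : ℚ :=
  2*(2*(n:ℚ)+3) * (-1)^k * (k:ℚ)^3 * ((n+2).choose k) * ((n+k).choose k) * ((2*k).choose k) / 4^k

noncomputable def Sq (n : ℕ) : ℚ := ∑ k ∈ Finset.range (n+1), tq n k

lemma wz (n k : ℕ) :
    ((n:ℚ)+1)*((n:ℚ)+2) * (((n:ℚ)+2)^2 * tq (n+2) k - ((n:ℚ)+1)^2 * tq n k)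
      = Hq n k - Hq n (k+1) := by
  unfold tq Hq
  rw [show 2*(k+1) = 2*k+2 by ring, show n+(k+1) = n+k+1 by ring]
  push_cast
  linear_combination ((-1:ℚ)^k / 4^(k+1)) * starId n k

lemma tq_zero (n k : ℕ) (h : n < k) : tq n k = 0 := by
  unfold tq
  rw [Nat.choose_eq_zero_of_lt h]
  simp

lemma Sq_rec (n : ℕ) : ((n:ℚ)+2)^2 * Sq (n+2) = ((n:ℚ)+1)^2 * Sq n := by
  have hS : Sq n = ∑ k ∈ Finset.range (n+3), tq n k := by
    unfold Sq
    rw [Finset.sum_range_succ (n := n+2), Finset.sum_range_succ (n := n+1),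
      tq_zero n (n+1) (by omega), tq_zero n (n+2) (by omega)]
    ring
  have hS2 : Sq (n+2) = ∑ k ∈ Finset.range (n+3), tq (n+2) k := rfl
  have htel : ∑ k ∈ Finset.range (n+3), (Hq n k - Hq n (k+1)) = Hq n 0 - Hq n (n+3) :=
    Finset.sum_range_sub' (fun k => Hq n k) (n+3)
  have h0 : Hq n 0 = 0 := by unfold Hq; simp
  have hend : Hq n (n+3) = 0 := by
    unfold Hq
    rw [Nat.choose_eq_zero_of_lt (show n+2 < n+3 by omega)]
    simp
  have hne : ((n:ℚ)+1)*((n:ℚ)+2) ≠ 0 := by positivity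
  have main2 : ∑ k ∈ Finset.range (n+3),
      (((n:ℚ)+2)^2 * tq (n+2) k - ((n:ℚ)+1)^2 * tq n k) = 0 := by
    have hmul : ((n:ℚ)+1)*((n:ℚ)+2) * (∑ k ∈ Finset.range (n+3),
        (((n:ℚ)+2)^2 * tq (n+2) k - ((n:ℚ)+1)^2 * tq n k)) = 0 := by
      rw [Finset.mul_sum]
      simp only [wz]
      rw [htel, h0, hend]
      ring
    rcases mul_eq_zero.mp hmul with h | h
    · exact absurd h hne
    · exact h
  have key2 : ((n:ℚ)+2)^2 * Sq (n+2) - ((n:ℚ)+1)^2 * Sq n = 0 := by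
    rw [hS, hS2, Finset.mul_sum, Finset.mul_sum, ← Finset.sum_sub_distrib]
    exact main2
  linarith [key2]

lemma Sq_odd (m : ℕ) : Sq (2*m+1) = 0 := by
  induction m with
  | zero =>
    unfold Sq
    simp [Finset.sum_range_succ, tq]
    norm_num
  | succ m ih =>
    have h := Sq_rec (2*m+1)
    rw [show 2*m+1+2 = 2*(m+1)+1 by omega] at h
    rw [ih, mul_zero] at h
    have hne : ((2*m+1:ℕ):ℚ)+2 ≠ 0 := by positivity
    rcases mul_eq_zero.mp h with h' | h'
    · exact absurd (pow_eq_zero_iff (n := 2) (by norm_num) |>.mp h') hne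
    · exact h'

lemma summand_eq (n k : ℕ) :
    (ascPochhammer ℚ k).eval (-(n:ℚ)) * (ascPochhammer ℚ k).eval ((n:ℚ)+1) *
      (ascPochhammer ℚ k).eval (1/2) /
    ((ascPochhammer ℚ k).eval 1 * (ascPochhammer ℚ k).eval 1 * (k.factorial : ℚ))
      = tq n k := by
  rw [poch_neg, poch_pos, poch_half, poch_one]
  unfold tq
  have hf : (k.factorial : ℚ) ≠ 0 := by exact_mod_cast k.factorial_ne_zero
  have h4 : (4:ℚ)^k ≠ 0 := by positivity
  field_simp

/-- For a prime `p ≡ 3 (mod 4)`, the terminating sum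
`∑_{k=0}^{(p-1)/2} ((1-p)/2)_k ((1+p)/2)_k (1/2)_k / ((1)_k (1)_k k!)` vanishes. -/
theorem threeF2_vanishing (p : ℕ) (hp : p.Prime) (hp4 : p % 4 = 3) :
    (∑ k ∈ Finset.range ((p - 1) / 2 + 1),
        (ascPochhammer ℚ k).eval ((1 - (p : ℚ)) / 2) *
          (ascPochhammer ℚ k).eval ((1 + (p : ℚ)) / 2) *
          (ascPochhammer ℚ k).eval (1 / 2) /
        ((ascPochhammer ℚ k).eval 1 * (ascPochhammer ℚ k).eval 1 *
          (k.factorial : ℚ))) = 0 := by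
  obtain ⟨m, rfl⟩ : ∃ m, p = 4*m+3 := ⟨p/4, by omega⟩
  have hidx : (4*m+3-1)/2 = 2*m+1 := by omega
  have e1 : (1 - ((4*m+3 : ℕ) : ℚ))/2 = -(((2*m+1 : ℕ) : ℕ) : ℚ) := by push_cast; ring
  have e2 : (1 + ((4*m+3 : ℕ) : ℚ))/2 = (((2*m+1 : ℕ) : ℚ)) + 1 := by push_cast; ring
  rw [hidx]
  calc (∑ k ∈ Finset.range (2*m+1+1),
        (ascPochhammer ℚ k).eval ((1 - ((4*m+3:ℕ) : ℚ)) / 2) *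
          (ascPochhammer ℚ k).eval ((1 + ((4*m+3:ℕ) : ℚ)) / 2) *
          (ascPochhammer ℚ k).eval (1 / 2) /
        ((ascPochhammer ℚ k).eval 1 * (ascPochhammer ℚ k).eval 1 *
          (k.factorial : ℚ)))
      = ∑ k ∈ Finset.range (2*m+1+1), tq (2*m+1) k := by
        refine Finset.sum_congr rfl (fun k _ => ?_)
        rw [e1, e2]
        exact summand_eq (2*m+1) k
    _ = Sq (2*m+1) := rfl
    _ = 0 := Sq_odd m
end

section
/- For a prime p ≥ 5 and all k with (tp−1)/3 < k < p, where t ∈ {1,2} is chosen with tp ≡ 1 (mod 3), the rising factorial (1/3)_k has positive p-adic valuation while (1)_k = k! is a p-adic unit; hence each such term (1/3)_k^6/(k!)^6 · (6k+1) is divisible by p^6. -/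
lemma ascPochhammer_eval_eq_prod_range' {R : Type*} [CommSemiring R] (n : ℕ) (x : R) :
    (ascPochhammer R n).eval x = ∏ i ∈ Finset.range n, (x + i) := by
  induction n with
  | zero => simp
  | succ n ih =>
    rw [ascPochhammer_succ_right, Finset.prod_range_succ, ← ih]
    simp [Polynomial.eval_mul, Polynomial.eval_add]

/-- For `p ≥ 5` prime, `t ∈ {1,2}` with `tp ≡ 1 (mod 3)` and
`(tp-1)/3 < k ≤ p-1`: `v_p((1/3)_k) ≥ 1`, `v_p(k!) = 0`, and
`v_p((6k+1) (1/3)_k⁶ / (k!)⁶) ≥ 6`. -/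
theorem pochhammer_third_tail (p : ℕ) [Fact p.Prime] (hp : 5 ≤ p)
    (t : ℕ) (ht : t = 1 ∨ t = 2) (ht3 : t * p % 3 = 1)
    (k : ℕ) (hk1 : (t * p - 1) / 3 < k) (hk2 : k ≤ p - 1) :
    ‖(ascPochhammer ℚ_[p] k).eval (1 / 3)‖ ≤ ((p : ℝ))⁻¹ ∧
      ‖(k.factorial : ℚ_[p])‖ = 1 ∧
      ‖(6 * (k : ℚ_[p]) + 1) * ((ascPochhammer ℚ_[p] k).eval (1 / 3)) ^ 6 /
          ((k.factorial : ℚ_[p])) ^ 6‖ ≤ (p : ℝ) ^ (-6 : ℤ) := by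
  have hpp := (Fact.out : p.Prime)
  have hp3 : ¬ (p ∣ 3) := by
    intro h
    have := Nat.le_of_dvd (by norm_num) h
    omega
  have h3 : ‖(3 : ℚ_[p])‖ = 1 := by
    have := Padic.norm_intCast_lt_one_iff (p := p) (k := 3)
    have h1 : ‖((3 : ℤ) : ℚ_[p])‖ ≤ 1 := Padic.norm_int_le_one _
    have h2 : ¬ ‖((3 : ℤ) : ℚ_[p])‖ < 1 := by
      rw [this]; exact_mod_cast hp3
    push_cast at h1 h2
    linarith
  have h3ne : (3 : ℚ_[p]) ≠ 0 := by
    intro h; rw [h, norm_zero] at h3; norm_num at h3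
  -- the special index
  set i0 := (t * p - 1) / 3 with hi0
  have htp : 3 * i0 = t * p - 1 := by omega
  have htp1 : 1 ≤ t * p := by
    rcases ht with h | h <;> omega
  have hkey : (1 : ℚ_[p]) / 3 + (i0 : ℚ_[p]) = (t : ℚ_[p]) * p / 3 := by
    field_simp
    have : (3 : ℚ_[p]) * i0 = ((3 * i0 : ℕ) : ℚ_[p]) := by push_cast; ring
    rw [add_comm]
    have h1 : ((1 : ℕ) : ℚ_[p]) + ((3 * i0 : ℕ) : ℚ_[p]) = ((t * p : ℕ) : ℚ_[p]) := by
      rw [← Nat.cast_add]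
      congr 1
      omega
    push_cast at h1 ⊢
    linear_combination h1
  have hnormt : ‖(t : ℚ_[p])‖ = 1 := by
    rcases ht with h | h
    · simp [h]
    · subst h
      have := Padic.norm_intCast_lt_one_iff (p := p) (k := 2)
      have h1 : ‖((2 : ℤ) : ℚ_[p])‖ ≤ 1 := Padic.norm_int_le_one _
      have h2 : ¬ ‖((2 : ℤ) : ℚ_[p])‖ < 1 := by
        rw [this]
        intro h
        have h' : p ∣ 2 := Int.natCast_dvd_natCast.mp (by exact_mod_cast h)
        have := Nat.le_of_dvd (by norm_num) h'
        omega
      push_cast at h1 h2 ⊢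
      linarith
  have hfac0 : ‖(1 : ℚ_[p]) / 3 + (i0 : ℚ_[p])‖ = (p : ℝ)⁻¹ := by
    rw [hkey]
    rw [norm_div, norm_mul, hnormt, h3, Padic.norm_p]
    ring
  -- each factor has norm ≤ 1
  have hfacle : ∀ i : ℕ, ‖(1 : ℚ_[p]) / 3 + (i : ℚ_[p])‖ ≤ 1 := by
    intro i
    have h13 : ‖(1 : ℚ_[p]) / 3‖ = 1 := by rw [norm_div, h3, norm_one]; ring
    have hi : ‖((i : ℤ) : ℚ_[p])‖ ≤ 1 := Padic.norm_int_le_one _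
    push_cast at hi
    calc ‖(1 : ℚ_[p]) / 3 + (i : ℚ_[p])‖ ≤ max ‖(1 : ℚ_[p]) / 3‖ ‖(i : ℚ_[p])‖ :=
          Padic.nonarchimedean _ _
      _ ≤ 1 := by rw [h13]; exact max_le le_rfl hi
  have hmem : i0 ∈ Finset.range k := Finset.mem_range.mpr hk1
  -- first claim
  have claim1 : ‖(ascPochhammer ℚ_[p] k).eval (1 / 3)‖ ≤ ((p : ℝ))⁻¹ := by
    rw [ascPochhammer_eval_eq_prod_range', norm_prod]
    rw [← Finset.prod_erase_mul _ _ hmem, hfac0]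
    have : ∏ i ∈ (Finset.range k).erase i0, ‖(1 : ℚ_[p]) / 3 + (i : ℚ_[p])‖ ≤ 1 :=
      Finset.prod_le_one (fun i _ => norm_nonneg _) (fun i _ => hfacle i)
    have hpinv : (0 : ℝ) ≤ (p : ℝ)⁻¹ := by positivity
    nlinarith
  -- second claim
  have claim2 : ‖(k.factorial : ℚ_[p])‖ = 1 := by
    have hdvd : ¬ (p ∣ k.factorial) := by
      intro h
      have := (Nat.Prime.dvd_factorial hpp).mp h
      omega
    have h1 : ‖((k.factorial : ℤ) : ℚ_[p])‖ ≤ 1 := Padic.norm_int_le_one _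
    have h2 : ¬ ‖((k.factorial : ℤ) : ℚ_[p])‖ < 1 := by
      rw [Padic.norm_intCast_lt_one_iff]
      exact_mod_cast hdvd
    push_cast at h1 h2 ⊢
    linarith
  refine ⟨claim1, claim2, ?_⟩
  have h6k : ‖6 * (k : ℚ_[p]) + 1‖ ≤ 1 := by
    have : (6 : ℚ_[p]) * k + 1 = ((6 * k + 1 : ℤ) : ℚ_[p]) := by push_cast; ring
    rw [this]
    exact Padic.norm_int_le_one _
  rw [norm_div, norm_mul, norm_pow, norm_pow, claim2]
  have hnn : (0 : ℝ) ≤ ‖(ascPochhammer ℚ_[p] k).eval (1 / 3)‖ := norm_nonneg _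
  have hpow : ‖(ascPochhammer ℚ_[p] k).eval (1 / 3)‖ ^ 6 ≤ ((p : ℝ)⁻¹) ^ 6 :=
    pow_le_pow_left₀ hnn claim1 6
  have hfin : (((p : ℝ))⁻¹) ^ 6 = (p : ℝ) ^ (-6 : ℤ) := by
    rw [zpow_neg, inv_pow]
    norm_num
  rw [one_pow, div_one]
  calc ‖6 * (k : ℚ_[p]) + 1‖ * ‖(ascPochhammer ℚ_[p] k).eval (1 / 3)‖ ^ 6
      ≤ 1 * ((p : ℝ)⁻¹) ^ 6 := by
        apply mul_le_mul h6k hpow (by positivity) (by norm_num)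
    _ = (p : ℝ) ^ (-6 : ℤ) := by rw [one_mul, hfin]
end

section
/- For n ∈ ℕ with n ≥ 2 and a prime p ≡ 1 (mod n), with p ≥ 5, the congruence (1 − 1/n)_p ≡ (n−1)·(1/n)_p (mod p³) holds in Z_p. -/
open Finset

namespace PochAux

/-- the mod-p involution j ↦ (2t - j) mod p, written without `%`. -/
def invol (p t j : ℕ) : ℕ :=
  if 2*t < j then 2*t + p - j else if 2*t - j < p then 2*t - j else 2*t - j - p

lemma invol_lt {p t j : ℕ} (ht : 2*t ≤ p - 1) (hp : 5 ≤ p) (hj : j < p) :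
    invol p t j < p := by
  unfold invol; split_ifs <;> omega

lemma invol_ne {p t j : ℕ} (ht : 2*t ≤ p - 1) (hp : 5 ≤ p) (hj : j < p) (hjt : j ≠ t) :
    invol p t j ≠ t := by
  unfold invol; split_ifs <;> omega

lemma invol_invol {p t j : ℕ} (ht : 2*t ≤ p - 1) (hp : 5 ≤ p) (hj : j < p) :
    invol p t (invol p t j) = j := by
  unfold invol; split_ifs <;> omega

lemma invol_sum {p t j : ℕ} (ht : 2*t ≤ p - 1) (hp : 5 ≤ p) (hj : j < p) :
    j + invol p t j = 2*t ∨ j + invol p t j = 2*t + p ∨ j + invol p t j + p = 2*t := by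
  unfold invol; split_ifs <;> omega

variable {p : ℕ} [Fact p.Prime]

lemma norm_int_eq_one (k : ℤ) (h : ¬ (p:ℤ) ∣ k) : ‖(k : ℚ_[p])‖ = 1 :=
  le_antisymm (Padic.norm_int_le_one k)
    (not_lt.1 fun hlt => h ((Padic.norm_intCast_lt_one_iff (k := k)).1 hlt))

lemma norm_sum_le {ι : Type*} (s : Finset ι) (f : ι → ℚ_[p]) {C : ℝ} (hC : 0 ≤ C)
    (h : ∀ i ∈ s, ‖f i‖ ≤ C) : ‖∑ i ∈ s, f i‖ ≤ C := by
  classical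
  revert h
  refine Finset.induction_on s ?_ ?_
  · intro _; simpa using hC
  · intro a s ha ih h
    rw [Finset.sum_insert ha]
    exact le_trans (Padic.nonarchimedean _ _)
      (max_le (h a (Finset.mem_insert_self a s))
        (ih fun i hi => h i (Finset.mem_insert_of_mem hi)))

lemma norm_q_le_one : ‖((p:ℕ) : ℚ_[p])‖ ≤ 1 := by
  have := Padic.norm_p (p := p)
  rw [this]
  have hp1 : (1:ℝ) ≤ (p:ℝ) := by exact_mod_cast (Fact.out : p.Prime).one_lt.le
  exact inv_le_one_of_one_le₀ hp1

lemma prod_one_sub_aux (s : Finset ℕ) (u : ℕ → ℚ_[p]) (hu : ∀ j ∈ s, ‖u j‖ ≤ 1) :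
    ‖(∏ j ∈ s, (1 - (p:ℚ_[p]) * u j)) - (1 - (p:ℚ_[p]) * ∑ j ∈ s, u j)‖
      ≤ (p:ℝ)^(-2 : ℤ) := by
  classical
  have hp0 : (0:ℝ) < (p:ℝ) := by exact_mod_cast (Fact.out : p.Prime).pos
  have hq : ‖((p:ℕ) : ℚ_[p])‖ = (p:ℝ)⁻¹ := Padic.norm_p
  have h2 : (p:ℝ)^(-2:ℤ) = (p:ℝ)⁻¹ * (p:ℝ)⁻¹ := by
    rw [show (-2:ℤ) = (-1) + (-1) by norm_num, zpow_add₀ hp0.ne', zpow_neg_one]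
  have h2nonneg : (0:ℝ) ≤ (p:ℝ)^(-2:ℤ) := le_of_lt (zpow_pos hp0 _)
  revert hu
  refine Finset.induction_on s ?_ ?_
  · intro _; simpa using h2nonneg
  · intro a s ha ih hu
    have hua : ‖u a‖ ≤ 1 := hu a (Finset.mem_insert_self a s)
    have hus : ∀ j ∈ s, ‖u j‖ ≤ 1 := fun j hj => hu j (Finset.mem_insert_of_mem hj)
    have ihs := ih hus
    have hS : ‖∑ j ∈ s, u j‖ ≤ 1 := norm_sum_le s u zero_le_one hus
    rw [Finset.prod_insert ha, Finset.sum_insert ha]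
    have key : (1 - (p:ℚ_[p]) * u a) * (∏ j ∈ s, (1 - (p:ℚ_[p]) * u j))
          - (1 - (p:ℚ_[p]) * (u a + ∑ j ∈ s, u j))
        = (1 - (p:ℚ_[p]) * u a) * ((∏ j ∈ s, (1 - (p:ℚ_[p]) * u j))
            - (1 - (p:ℚ_[p]) * ∑ j ∈ s, u j))
          + ((p:ℚ_[p]) * u a) * ((p:ℚ_[p]) * ∑ j ∈ s, u j) := by ring
    rw [key]
    refine le_trans (Padic.nonarchimedean _ _) (max_le ?_ ?_)
    · have h1 : ‖(1 : ℚ_[p]) - (p:ℚ_[p]) * u a‖ ≤ 1 := by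
        rw [sub_eq_add_neg]
        refine le_trans (Padic.nonarchimedean _ _) (max_le (by simp) ?_)
        rw [norm_neg, norm_mul]
        calc ‖((p:ℕ):ℚ_[p])‖ * ‖u a‖ ≤ 1 * 1 :=
              mul_le_mul norm_q_le_one hua (norm_nonneg _) zero_le_one
          _ = 1 := by ring
      calc ‖(1 - (p:ℚ_[p]) * u a) * _‖ = ‖(1 - (p:ℚ_[p]) * u a)‖ * _ := norm_mul _ _
        _ ≤ 1 * (p:ℝ)^(-2:ℤ) := mul_le_mul h1 ihs (norm_nonneg _) zero_le_one
        _ = (p:ℝ)^(-2:ℤ) := one_mul _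
    · rw [norm_mul, norm_mul, norm_mul, hq, h2]
      have hb1 : (p:ℝ)⁻¹ * ‖u a‖ ≤ (p:ℝ)⁻¹ * 1 :=
        mul_le_mul_of_nonneg_left hua (by positivity)
      have hb2 : (p:ℝ)⁻¹ * ‖∑ j ∈ s, u j‖ ≤ (p:ℝ)⁻¹ * 1 :=
        mul_le_mul_of_nonneg_left hS (by positivity)
      calc (p:ℝ)⁻¹ * ‖u a‖ * ((p:ℝ)⁻¹ * ‖∑ j ∈ s, u j‖)
          ≤ ((p:ℝ)⁻¹ * 1) * ((p:ℝ)⁻¹ * 1) := by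
            apply mul_le_mul hb1 hb2 (by positivity) (by positivity)
        _ = (p:ℝ)⁻¹ * (p:ℝ)⁻¹ := by ring

lemma asc_eval (m : ℕ) (x : ℚ_[p]) :
    (ascPochhammer ℚ_[p] m).eval x = ∏ j ∈ range m, (x + j) := by
  induction m with
  | zero => simp [ascPochhammer_zero]
  | succ k ih => rw [ascPochhammer_succ_eval, Finset.prod_range_succ, ih]

end PochAux

open PochAux

/-- For `n ≥ 2` and a prime `p ≥ 5` with `p ≡ 1 (mod n)`,
`(1 - 1/n)_p ≡ (n-1) (1/n)_p (mod p³)`. -/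
theorem pochhammer_one_over_n (p : ℕ) [Fact p.Prime] (hp : 5 ≤ p)
    (n : ℕ) (hn : 2 ≤ n) (hmod : p % n = 1) :
    ‖(ascPochhammer ℚ_[p] p).eval (1 - ((n : ℚ_[p]))⁻¹) -
        ((n : ℚ_[p]) - 1) * (ascPochhammer ℚ_[p] p).eval (((n : ℚ_[p]))⁻¹)‖
      ≤ (p : ℝ) ^ (-3 : ℤ) := by
  classical
  have hprime : p.Prime := Fact.out
  have hp0 : (0:ℝ) < (p:ℝ) := by exact_mod_cast hprime.pos
  set t : ℕ := p / n with ht_def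
  have hpt : n * t + 1 = p := by
    have h := Nat.div_add_mod p n
    rw [← ht_def] at h
    omega
  have hnlep : n ≤ p := by
    by_contra h
    push_neg at h
    rw [Nat.mod_eq_of_lt h] at hmod
    omega
  have ht1 : 1 ≤ t := (Nat.one_le_div_iff (by omega)).2 hnlep
  have h2t : 2*t ≤ p - 1 := by
    have := Nat.mul_le_mul_right t hn
    omega
  have htp : t < p := by
    have := Nat.mul_le_mul_right t hn
    omega
  have hnp : n < p := by
    have : n * 1 ≤ n * t := Nat.mul_le_mul_left n ht1
    omega
  -- basic norms
  have hpn : ¬ (p:ℤ) ∣ (n:ℤ) := by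
    intro h
    have := Int.le_of_dvd (by exact_mod_cast (by omega : 0 < n)) h
    omega
  have hnorm_n : ‖((n:ℤ) : ℚ_[p])‖ = 1 := norm_int_eq_one _ hpn
  have hnorm_n' : ‖((n:ℕ) : ℚ_[p])‖ = 1 := by push_cast at hnorm_n ⊢; exact hnorm_n
  have hn0 : ((n:ℕ) : ℚ_[p]) ≠ 0 := by
    intro h; rw [h] at hnorm_n'; simp at hnorm_n'
  set a : ℚ_[p] := ((n:ℕ) : ℚ_[p])⁻¹ with ha_def
  have hnorm_a : ‖a‖ = 1 := by rw [ha_def, norm_inv, hnorm_n', inv_one]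
  have hna : ((n:ℕ) : ℚ_[p]) * a = 1 := mul_inv_cancel₀ hn0
  have hq : ‖((p:ℕ) : ℚ_[p])‖ = (p:ℝ)⁻¹ := Padic.norm_p
  -- a + t = p * a
  have hat : a + (t:ℚ_[p]) = ((p:ℕ):ℚ_[p]) * a := by
    have hcast : ((n:ℕ):ℚ_[p]) * ((t:ℕ):ℚ_[p]) + 1 = ((p:ℕ):ℚ_[p]) := by
      exact_mod_cast congrArg (fun m : ℕ => ((m:ℚ_[p]))) hpt
    linear_combination a * hcast - (t:ℚ_[p]) * hna
  -- norm of a + j for j ≠ t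
  have hunit : ∀ j : ℕ, j < p → j ≠ t → ‖a + (j:ℚ_[p])‖ = 1 := by
    intro j hj hjt
    have hdvd : ¬ (p:ℤ) ∣ ((j:ℤ) - (t:ℤ)) := by
      intro h
      have := Int.eq_zero_of_abs_lt_dvd h (by
        rw [abs_sub_lt_iff]; constructor <;> [exact_mod_cast (by omega : (j:ℤ) - t < p);
          exact_mod_cast (by omega : (t:ℤ) - j < p)])
      omega
    have hnormd : ‖(((j:ℤ) - (t:ℤ) : ℤ) : ℚ_[p])‖ = 1 := norm_int_eq_one _ hdvd
    have heq : a + (j:ℚ_[p]) = ((p:ℕ):ℚ_[p]) * a + (((j:ℤ) - (t:ℤ) : ℤ) : ℚ_[p]) := by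
      push_cast
      linear_combination hat
    have hpa : ‖((p:ℕ):ℚ_[p]) * a‖ = (p:ℝ)⁻¹ := by
      rw [norm_mul, hq, hnorm_a, mul_one]
    have hlt : (p:ℝ)⁻¹ < 1 := by
      rw [inv_lt_one_iff₀]; right; exact_mod_cast (by omega : 1 < p)
    rw [heq, Padic.add_eq_max_of_ne (by rw [hpa, hnormd]; exact ne_of_lt hlt),
      hpa, hnormd]
    exact max_eq_right hlt.le
  have hne0 : ∀ j : ℕ, j < p → j ≠ t → a + (j:ℚ_[p]) ≠ 0 := by
    intro j hj hjt h
    have := hunit j hj hjt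
    rw [h] at this; simp at this
  set s : Finset ℕ := (range p).erase t with hs_def
  have hmem_s : ∀ j ∈ s, j < p ∧ j ≠ t := by
    intro j hj
    rw [hs_def, Finset.mem_erase, Finset.mem_range] at hj
    exact ⟨hj.2, hj.1⟩
  -- key sum bound
  have key_sum : ‖∑ j ∈ s, (a + (j:ℚ_[p]))⁻¹‖ ≤ (p:ℝ)⁻¹ := by
    set σ : ℕ → ℕ := fun j => invol p t j with hσ_def
    have hσs : ∀ j ∈ s, σ j ∈ s := by
      intro j hj
      obtain ⟨h1, h2⟩ := hmem_s j hj
      rw [hs_def, Finset.mem_erase, Finset.mem_range]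
      exact ⟨invol_ne h2t hp h1 h2, invol_lt h2t hp h1⟩
    have hσσ : ∀ j ∈ s, σ (σ j) = j := by
      intro j hj; exact invol_invol h2t hp (hmem_s j hj).1
    have hre : ∑ j ∈ s, (a + ((σ j : ℕ):ℚ_[p]))⁻¹ = ∑ j ∈ s, (a + (j:ℚ_[p]))⁻¹ := by
      refine Finset.sum_nbij' σ σ hσs hσs hσσ hσσ ?_
      intro j hj; rfl
    have h2S : (2:ℚ_[p]) * ∑ j ∈ s, (a + (j:ℚ_[p]))⁻¹
        = ∑ j ∈ s, ((a + (j:ℚ_[p]))⁻¹ + (a + ((σ j : ℕ):ℚ_[p]))⁻¹) := by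
      rw [Finset.sum_add_distrib, hre]; ring
    have hterm : ∀ j ∈ s, ‖(a + (j:ℚ_[p]))⁻¹ + (a + ((σ j : ℕ):ℚ_[p]))⁻¹‖ ≤ (p:ℝ)⁻¹ := by
      intro j hj
      obtain ⟨hj1, hj2⟩ := hmem_s j hj
      have hk := hσs j hj
      obtain ⟨hk1, hk2⟩ := hmem_s _ hk
      have hx := hne0 j hj1 hj2
      have hy := hne0 (σ j) hk1 hk2
      have hiden : (a + (j:ℚ_[p]))⁻¹ + (a + ((σ j : ℕ):ℚ_[p]))⁻¹
          = ((a + (j:ℚ_[p])) + (a + ((σ j : ℕ):ℚ_[p])))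
            * ((a + (j:ℚ_[p]))⁻¹ * (a + ((σ j : ℕ):ℚ_[p]))⁻¹) := by
        field_simp
        ring
      rw [hiden, norm_mul, norm_mul, norm_inv, norm_inv,
        hunit j hj1 hj2, hunit _ hk1 hk2]
      simp only [inv_one, mul_one]
      -- bound ‖(a+j) + (a+σj)‖
      have hsum := invol_sum (p := p) (t := t) h2t hp hj1
      have hm : ∃ m : ℤ, ((j:ℤ) + (σ j : ℤ)) - 2*(t:ℤ) = (p:ℤ) * m ∧ (m = 0 ∨ m = 1 ∨ m = -1) := by
        rcases hsum with h | h | h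
        · exact ⟨0, by push_cast [hσ_def] at h ⊢; omega, Or.inl rfl⟩
        · exact ⟨1, by push_cast [hσ_def] at h ⊢; omega, Or.inr (Or.inl rfl)⟩
        · exact ⟨-1, by push_cast [hσ_def] at h ⊢; omega, Or.inr (Or.inr rfl)⟩
      obtain ⟨m, hm1, hm2⟩ := hm
      have heq2 : (a + (j:ℚ_[p])) + (a + ((σ j : ℕ):ℚ_[p]))
          = 2 * (((p:ℕ):ℚ_[p]) * a) + (((p:ℤ) * m : ℤ) : ℚ_[p]) := by
        have : (((j:ℤ) + (σ j : ℤ) - 2*(t:ℤ) : ℤ) : ℚ_[p]) = (((p:ℤ) * m : ℤ) : ℚ_[p]) := by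
          exact_mod_cast congrArg (fun z : ℤ => ((z : ℚ_[p]))) hm1
        push_cast at this ⊢
        linear_combination 2 * hat + this
      rw [heq2]
      refine le_trans (Padic.nonarchimedean _ _) (max_le ?_ ?_)
      · rw [norm_mul, norm_mul, hq, hnorm_a, mul_one]
        have h2norm : ‖(2:ℚ_[p])‖ ≤ 1 := by
          have := Padic.norm_int_le_one (p := p) 2
          exact_mod_cast this
        calc ‖(2:ℚ_[p])‖ * (p:ℝ)⁻¹ ≤ 1 * (p:ℝ)⁻¹ :=
              mul_le_mul_of_nonneg_right h2norm (by positivity)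
          _ = (p:ℝ)⁻¹ := one_mul _
      · rcases hm2 with rfl | rfl | rfl
        · simp
        · rw [mul_one]
          have : (((p:ℤ)) : ℚ_[p]) = ((p:ℕ) : ℚ_[p]) := by push_cast; ring
          rw [this, hq]
        · have : (((p:ℤ) * (-1) : ℤ) : ℚ_[p]) = -(((p:ℕ)) : ℚ_[p]) := by push_cast; ring
          rw [this, norm_neg, hq]
    have h2norm1 : ‖(2:ℚ_[p])‖ = 1 := by
      have := norm_int_eq_one (p := p) 2 (by
        intro h
        have := Int.le_of_dvd (by norm_num) h
        omega)
      exact_mod_cast this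
    have := norm_sum_le s _ (by positivity : (0:ℝ) ≤ (p:ℝ)⁻¹) hterm
    rw [← h2S, norm_mul, h2norm1, one_mul] at this
    exact this
  -- now the main computation
  rw [asc_eval, asc_eval]
  -- Step 1: reflection
  have hrefl : ∏ j ∈ range p, (1 - a + (j:ℚ_[p]))
      = ∏ j ∈ range p, (((p:ℕ):ℚ_[p]) - (a + (j:ℚ_[p]))) := by
    rw [← Finset.prod_range_reflect (fun j => ((p:ℕ):ℚ_[p]) - (a + (j:ℚ_[p]))) p]
    refine Finset.prod_congr rfl ?_
    intro j hj
    have hjp : j < p := Finset.mem_range.1 hj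
    have hc : ((p - 1 - j : ℕ) : ℚ_[p]) = ((p:ℕ):ℚ_[p]) - 1 - (j:ℚ_[p]) := by
      have h1 : (p - 1 - j : ℕ) = p - (1 + j) := by omega
      rw [h1, Nat.cast_sub (by omega)]
      push_cast; ring
    rw [hc]; ring
  rw [hrefl]
  -- Step 2: flip signs
  have hflip : ∏ j ∈ range p, (((p:ℕ):ℚ_[p]) - (a + (j:ℚ_[p])))
      = - ∏ j ∈ range p, ((a + (j:ℚ_[p])) - ((p:ℕ):ℚ_[p])) := by
    have h1 : ∀ j ∈ range p, ((p:ℕ):ℚ_[p]) - (a + (j:ℚ_[p]))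
        = (-1) * ((a + (j:ℚ_[p])) - ((p:ℕ):ℚ_[p])) := by intro j _; ring
    rw [Finset.prod_congr rfl h1, Finset.prod_mul_distrib, Finset.prod_const,
      Finset.card_range]
    have hodd : Odd p := hprime.odd_of_ne_two (by omega)
    rw [hodd.neg_one_pow]
    ring
  rw [hflip]
  -- Step 3: pull out the j = t factor
  have htmem : t ∈ range p := Finset.mem_range.2 htp
  rw [← Finset.mul_prod_erase (range p) (fun j => (a + (j:ℚ_[p])) - ((p:ℕ):ℚ_[p])) htmem,
    ← Finset.mul_prod_erase (range p) (fun j => (a + (j:ℚ_[p]))) htmem]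
  set P' : ℚ_[p] := ∏ j ∈ s, ((a + (j:ℚ_[p])) - ((p:ℕ):ℚ_[p])) with hP'
  set Q' : ℚ_[p] := ∏ j ∈ s, (a + (j:ℚ_[p])) with hQ'
  set Pi : ℚ_[p] := ∏ j ∈ s, (1 - ((p:ℕ):ℚ_[p]) * (a + (j:ℚ_[p]))⁻¹) with hPi
  have hP'Q' : P' = Q' * Pi := by
    rw [hP', hQ', hPi, ← Finset.prod_mul_distrib]
    refine Finset.prod_congr rfl ?_
    intro j hj
    obtain ⟨hj1, hj2⟩ := hmem_s j hj
    have h0 := hne0 j hj1 hj2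
    field_simp
  have hmain : -((a + (t:ℚ_[p]) - ((p:ℕ):ℚ_[p])) * P')
      - (((n:ℕ):ℚ_[p]) - 1) * ((a + (t:ℚ_[p])) * Q')
      = (((p:ℕ):ℚ_[p]) * (1 - a) * Q') * (Pi - 1) := by
    rw [hP'Q', hat]
    linear_combination (-(((p:ℕ):ℚ_[p]) * Q')) * hna
  -- assemble
  have hgoal_eq : (- ((a + (t:ℚ_[p]) - ((p:ℕ):ℚ_[p])) * P'))
      - (((n:ℕ):ℚ_[p]) - 1) * ((a + (t:ℚ_[p])) * Q')
      = (((p:ℕ):ℚ_[p]) * (1 - a) * Q') * (Pi - 1) := hmain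
  -- norms
  have hnorm_1a : ‖1 - a‖ = 1 := by
    have h1 : (1:ℚ_[p]) - a = (((n:ℕ):ℚ_[p]) - 1) * a := by
      rw [ha_def]
      field_simp
    have hdvd : ¬ (p:ℤ) ∣ ((n:ℤ) - 1) := by
      intro h
      have := Int.le_of_dvd (by exact_mod_cast (by omega : (0:ℤ) < (n:ℤ) - 1)) h
      omega
    have h2 : ‖((n:ℕ):ℚ_[p]) - 1‖ = 1 := by
      have := norm_int_eq_one (p := p) ((n:ℤ) - 1) hdvd
      have hc : ((((n:ℤ) - 1) : ℤ) : ℚ_[p]) = ((n:ℕ):ℚ_[p]) - 1 := by push_cast; ring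
      rwa [hc] at this
    rw [h1, norm_mul, h2, hnorm_a, mul_one]
  have hnorm_Q' : ‖Q'‖ = 1 := by
    rw [hQ', norm_prod]
    refine Finset.prod_eq_one ?_
    intro j hj
    obtain ⟨hj1, hj2⟩ := hmem_s j hj
    exact hunit j hj1 hj2
  have hnorm_Pi1 : ‖Pi - 1‖ ≤ (p:ℝ)^(-2:ℤ) := by
    have hsplit : Pi - 1 = (Pi - (1 - ((p:ℕ):ℚ_[p]) * ∑ j ∈ s, (a + (j:ℚ_[p]))⁻¹))
        + (- (((p:ℕ):ℚ_[p]) * ∑ j ∈ s, (a + (j:ℚ_[p]))⁻¹)) := by ring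
    rw [hsplit]
    refine le_trans (Padic.nonarchimedean _ _) (max_le ?_ ?_)
    · rw [hPi]
      refine prod_one_sub_aux s _ ?_
      intro j hj
      obtain ⟨hj1, hj2⟩ := hmem_s j hj
      rw [norm_inv, hunit j hj1 hj2, inv_one]
    · rw [norm_neg, norm_mul, hq]
      have h2 : (p:ℝ)^(-2:ℤ) = (p:ℝ)⁻¹ * (p:ℝ)⁻¹ := by
        rw [show (-2:ℤ) = (-1) + (-1) by norm_num, zpow_add₀ hp0.ne', zpow_neg_one]
      rw [h2]
      exact mul_le_mul_of_nonneg_left key_sum (by positivity)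
  calc ‖-((a + (t:ℚ_[p]) - ((p:ℕ):ℚ_[p])) * P')
        - (((n:ℕ):ℚ_[p]) - 1) * ((a + (t:ℚ_[p])) * Q')‖
      = ‖(((p:ℕ):ℚ_[p]) * (1 - a) * Q') * (Pi - 1)‖ := by rw [hgoal_eq]
    _ = (p:ℝ)⁻¹ * 1 * 1 * ‖Pi - 1‖ := by
        rw [norm_mul, norm_mul, norm_mul, hq, hnorm_1a, hnorm_Q']
    _ ≤ (p:ℝ)⁻¹ * 1 * 1 * (p:ℝ)^(-2:ℤ) := by
        apply mul_le_mul_of_nonneg_left hnorm_Pi1 (by positivity)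
    _ = (p:ℝ)^(-3:ℤ) := by
        rw [show (-3:ℤ) = (-1) + (-2) by norm_num, zpow_add₀ hp0.ne', zpow_neg_one]
        ring
end
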